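/- arXiv:1806.04069 — 4 statements merged into one kernel-verified Lean document; each statement's English description precedes it below -/
import Mathlib

section
/- Let q ∈ (0,1) and y > 0 be fixed. The function g(α) = (1/B(α, yα)) · ∫₀^q (1 − u/q) · u^{α−1} (1−u)^{yα−1} du is strictly decreasing in α on (0, ∞). Equivalently, the quantity 1 − I_q(α, yα) + (1/((1+y)q)) · I_q(α+1, yα) is strictly increasing in α on (0, ∞). (This is Lemma 5: when a user requests a file not in its own cache, the data offloading ratio R_{i,f} increases with the shape parameter α_{i,f} of the approximating beta distribution.) -/
open MeasureTheory Set

/-- The Euler Beta function `B(a,b) = ∫₀¹ t^(a-1) (1-t)^(b-1) dt`. -/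
noncomputable def eulerBeta (a b : ℝ) : ℝ :=
  ∫ t in (0:ℝ)..1, t ^ (a - 1) * (1 - t) ^ (b - 1)


section Aux
open intervalIntegral


lemma cpow_real_eq {x c : ℝ} (hx : 0 ≤ x) : (x:ℂ) ^ ((c:ℂ) - 1) = ((x ^ (c-1) : ℝ) : ℂ) := by
  rw [Complex.ofReal_cpow hx]
  push_cast
  ring_nf

lemma wInt {a b : ℝ} (ha : 0 < a) (hb : 0 < b) :
    IntervalIntegrable (fun t : ℝ => t ^ (a - 1) * (1 - t) ^ (b - 1)) volume 0 1 := by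
  have h := Complex.betaIntegral_convergent (u := (a:ℂ)) (v := (b:ℂ)) (by simpa) (by simpa)
  have h2 : IntervalIntegrable (fun x : ℝ =>
      Complex.re ((x:ℂ) ^ ((a:ℂ) - 1) * (1 - (x:ℂ)) ^ ((b:ℂ) - 1))) volume 0 1 :=
    ⟨h.1.re, h.2.re⟩
  apply h2.congr
  intro x hx
  dsimp only
  rw [uIoc_of_le (by norm_num : (0:ℝ) ≤ 1)] at hx
  have h1x : (1:ℂ) - (x:ℂ) = ((1 - x : ℝ) : ℂ) := by push_cast; ring
  rw [h1x, cpow_real_eq (le_of_lt hx.1), cpow_real_eq (by linarith [hx.2]),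
    ← Complex.ofReal_mul, Complex.ofReal_re]

lemma eulerBeta_complex (a b : ℝ) :
    ((eulerBeta a b : ℝ) : ℂ) = Complex.betaIntegral a b := by
  rw [eulerBeta, Complex.betaIntegral, ← intervalIntegral.integral_ofReal]
  apply intervalIntegral.integral_congr
  intro x hx
  rw [uIcc_of_le (by norm_num)] at hx
  have h1x : (1:ℂ) - (x:ℂ) = ((1 - x : ℝ) : ℂ) := by push_cast; ring
  simp only [h1x, cpow_real_eq hx.1, cpow_real_eq (by linarith [hx.2] : (0:ℝ) ≤ 1 - x),
    ← Complex.ofReal_mul]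

lemma eulerBeta_pos {a b : ℝ} (ha : 0 < a) (hb : 0 < b) : 0 < eulerBeta a b := by
  apply intervalIntegral_pos_of_pos_on (wInt ha hb) _ (by norm_num)
  intro x hx
  exact mul_pos (Real.rpow_pos_of_pos hx.1 _) (Real.rpow_pos_of_pos (by linarith [hx.2]) _)

lemma eulerBeta_rec {a b : ℝ} (ha : 0 < a) (hb : 0 < b) :
    (a + b) * eulerBeta (a + 1) b = a * eulerBeta a b := by
  have key : ∀ u v : ℝ, 0 < u → 0 < v →
      (Complex.Gamma u) * (Complex.Gamma v) = Complex.Gamma ((u:ℂ) + v) * (eulerBeta u v : ℂ) := by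
    intro u v hu hv
    rw [eulerBeta_complex, Complex.Gamma_mul_Gamma_eq_betaIntegral (by simpa) (by simpa)]
  have h1 := key (a+1) b (by linarith) hb
  have h2 := key a b ha hb
  push_cast at h1 h2
  have hga : Complex.Gamma ((a:ℂ) + 1) = (a:ℂ) * Complex.Gamma a :=
    Complex.Gamma_add_one _ (by exact_mod_cast ha.ne')
  have hgab : Complex.Gamma ((a:ℂ) + 1 + b) = ((a:ℂ)+b) * Complex.Gamma ((a:ℂ)+b) := by
    rw [show (a:ℂ) + 1 + b = ((a:ℂ)+b) + 1 by ring]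
    exact Complex.Gamma_add_one _ (by
      rw [show (a:ℂ) + b = ((a+b:ℝ):ℂ) by push_cast; ring]
      exact_mod_cast (by linarith : (0:ℝ) < a + b).ne')
  have hgne : Complex.Gamma ((a:ℂ)+(b:ℂ)) ≠ 0 := by
    rw [show (a:ℂ) + b = ((a+b:ℝ):ℂ) by push_cast; ring, Complex.Gamma_ofReal]
    exact_mod_cast (Real.Gamma_pos_of_pos (by linarith)).ne'
  have hc : (((a+b) * eulerBeta (a + 1) b : ℝ) : ℂ) = ((a * eulerBeta a b : ℝ) : ℂ) := by
    push_cast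
    apply mul_left_cancel₀ hgne
    rw [hgab] at h1
    rw [hga] at h1
    linear_combination (a:ℂ) * h2 - h1
  exact_mod_cast hc

lemma rho_cont {d e : ℝ} (hd : 0 < d) (he : 0 < e) :
    Continuous (fun t : ℝ => t ^ d * (1 - t) ^ e) := by
  apply Continuous.mul
  · rw [continuous_iff_continuousAt]
    intro x; exact Real.continuousAt_rpow_const x d (Or.inr hd.le)
  · have hc : Continuous fun t : ℝ => 1 - t := by continuity
    rw [continuous_iff_continuousAt]
    intro x
    exact (Real.continuousAt_rpow_const (1-x) e (Or.inr he.le)).comp hc.continuousAt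

lemma rho_hasDeriv {d e u : ℝ} (hu0 : 0 < u) (hu1 : u < 1) :
    HasDerivAt (fun t : ℝ => t ^ d * (1 - t) ^ e)
      (u ^ (d-1) * (1-u) ^ (e-1) * (d * (1-u) - e * u)) u := by
  have h1 : HasDerivAt (fun t : ℝ => t ^ d) (d * u ^ (d-1)) u :=
    Real.hasDerivAt_rpow_const (Or.inl hu0.ne')
  have hs : HasDerivAt (fun t : ℝ => 1 - t) (-1) u := by
    simpa using (hasDerivAt_id u).const_sub 1
  have h2 : HasDerivAt (fun t : ℝ => (1-t) ^ e) ((-1) * e * (1-u) ^ (e-1)) u :=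
    hs.rpow_const (Or.inl (by intro h; linarith [h] : (1:ℝ) - u ≠ 0))
  refine (h1.mul h2).congr_deriv ?_
  have e1 : (1-u) ^ e = (1-u) ^ (e-1) * (1-u) := by
    rw [← Real.rpow_add_one (by intro h; linarith [h] : (1:ℝ)-u ≠ 0) (e-1), sub_add_cancel]
  have e2 : u ^ d = u ^ (d-1) * u := by
    rw [← Real.rpow_add_one hu0.ne' (d-1), sub_add_cancel]
  rw [e1, e2]; ring

lemma rho_strictMonoOn {d e : ℝ} (hd : 0 < d) (he : 0 < e) :
    StrictMonoOn (fun t : ℝ => t ^ d * (1 - t) ^ e) (Icc 0 (d/(d+e))) := by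
  have hm1 : d/(d+e) < 1 := by
    rw [div_lt_one (by linarith)]; linarith
  apply strictMonoOn_of_deriv_pos (convex_Icc _ _) (rho_cont hd he).continuousOn
  intro x hx
  rw [interior_Icc] at hx
  have hx1 : x < 1 := hx.2.trans hm1
  rw [(rho_hasDeriv hx.1 hx1).deriv]
  have h3 : 0 < d * (1-x) - e * x := by
    have := hx.2
    rw [lt_div_iff₀ (by linarith)] at this
    nlinarith
  have p1 : 0 < x ^ (d-1) := Real.rpow_pos_of_pos hx.1 _
  have p2 : 0 < (1-x) ^ (e-1) := Real.rpow_pos_of_pos (by linarith) _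
  exact mul_pos (mul_pos p1 p2) h3

lemma rho_strictAntiOn {d e : ℝ} (hd : 0 < d) (he : 0 < e) :
    StrictAntiOn (fun t : ℝ => t ^ d * (1 - t) ^ e) (Icc (d/(d+e)) 1) := by
  have hm0 : 0 < d/(d+e) := by positivity
  apply strictAntiOn_of_deriv_neg (convex_Icc _ _) (rho_cont hd he).continuousOn
  intro x hx
  rw [interior_Icc] at hx
  have hx0 : 0 < x := hm0.trans hx.1
  rw [(rho_hasDeriv hx0 hx.2).deriv]
  have h3 : d * (1-x) - e * x < 0 := by
    have := hx.1
    rw [div_lt_iff₀ (by linarith)] at this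
    nlinarith
  have p1 : 0 < x ^ (d-1) := Real.rpow_pos_of_pos hx0 _
  have p2 : 0 < (1-x) ^ (e-1) := Real.rpow_pos_of_pos (by linarith [hx.2]) _
  exact mul_neg_of_pos_of_neg (mul_pos p1 p2) h3

-- integral sign helpers
lemma integral_nonpos_of_Ioo {f : ℝ → ℝ} {a b : ℝ} (hab : a ≤ b)
    (h : ∀ x ∈ Ioo a b, f x ≤ 0) : ∫ x in a..b, f x ≤ 0 := by
  have h0 : ∀ᵐ x ∂(volume.restrict (Icc a b)), 0 ≤ -f x := by
    rw [← Measure.restrict_congr_set Ioo_ae_eq_Icc,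
      MeasureTheory.ae_restrict_iff' measurableSet_Ioo]
    exact Filter.Eventually.of_forall fun x hx => by simpa using h x hx
  have : (0:ℝ) ≤ ∫ x in a..b, -f x := intervalIntegral.integral_nonneg_of_ae_restrict hab h0
  rw [intervalIntegral.integral_neg] at this
  linarith

lemma phi_convex {q : ℝ} (hq : 0 < q) : ConvexOn ℝ univ (fun u : ℝ => max (1 - u/q) 0) := by
  have h1 : ConvexOn ℝ univ (fun u : ℝ => 1 - u/q) := by
    refine ⟨convex_univ, ?_⟩
    intro x _ y _ p r hp hr hpr
    simp only [smul_eq_mul]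
    apply le_of_eq
    have hr' : r = 1 - p := by linarith
    subst hr'
    field_simp
    ring
  exact h1.sup (convexOn_const 0 convex_univ)

lemma secant_mid {Φ : ℝ → ℝ} (hΦ : ConvexOn ℝ univ Φ) {a b : ℝ} (hab : a < b)
    {u : ℝ} (hau : a ≤ u) (hub : u ≤ b) :
    Φ u ≤ Φ a + (Φ b - Φ a)/(b - a) * (u - a) := by
  rcases eq_or_lt_of_le hau with rfl | hau
  · simp
  rcases eq_or_lt_of_le hub with rfl | hub
  · apply le_of_eq
    rw [div_mul_cancel₀ _ (by linarith : u - a ≠ 0)]; ring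
  have h := hΦ.slope_mono_adjacent (mem_univ a) (mem_univ b) hau hub
  rw [div_le_div_iff₀ (by linarith) (by linarith)] at h
  have hba : (0:ℝ) < b - a := by linarith
  rw [← sub_nonneg]
  have key : (Φ a + (Φ b - Φ a)/(b - a) * (u - a) - Φ u) * (b - a)
      = (Φ b - Φ u) * (u - a) - (Φ u - Φ a) * (b - u) := by
    field_simp; ring
  nlinarith [key, h, hba]

lemma secant_left {Φ : ℝ → ℝ} (hΦ : ConvexOn ℝ univ Φ) {a b : ℝ} (hab : a < b)
    {u : ℝ} (hua : u < a) :
    Φ a + (Φ b - Φ a)/(b - a) * (u - a) ≤ Φ u := by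
  have h := hΦ.slope_mono_adjacent (mem_univ u) (mem_univ b) hua hab
  rw [div_le_div_iff₀ (by linarith) (by linarith)] at h
  have hba : (0:ℝ) < b - a := by linarith
  rw [← sub_nonneg]
  have key : (Φ u - (Φ a + (Φ b - Φ a)/(b - a) * (u - a))) * (b - a)
      = (Φ b - Φ a) * (a - u) - (Φ a - Φ u) * (b - a) := by
    field_simp; ring
  nlinarith [key, h, hba]

lemma secant_right {Φ : ℝ → ℝ} (hΦ : ConvexOn ℝ univ Φ) {a b : ℝ} (hab : a < b)
    {u : ℝ} (hbu : b < u) :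
    Φ a + (Φ b - Φ a)/(b - a) * (u - a) ≤ Φ u := by
  have h := hΦ.slope_mono_adjacent (mem_univ a) (mem_univ u) hab hbu
  rw [div_le_div_iff₀ (by linarith) (by linarith)] at h
  have hba : (0:ℝ) < b - a := by linarith
  rw [← sub_nonneg]
  have key : (Φ u - (Φ a + (Φ b - Φ a)/(b - a) * (u - a))) * (b - a)
      = (Φ u - Φ b) * (b - a) - (Φ b - Φ a) * (u - b) := by
    field_simp; ring
  nlinarith [key, h, hba]

lemma integral_nonneg_of_Ioo {f : ℝ → ℝ} {a b : ℝ} (hab : a ≤ b)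
    (h : ∀ x ∈ Set.Ioo a b, 0 ≤ f x) : 0 ≤ ∫ x in a..b, f x := by
  apply intervalIntegral.integral_nonneg_of_ae_restrict hab
  rw [← MeasureTheory.Measure.restrict_congr_set MeasureTheory.Ioo_ae_eq_Icc]
  exact (MeasureTheory.ae_restrict_iff' measurableSet_Ioo).mpr
    (Filter.Eventually.of_forall fun x hx => h x hx)

lemma uIcc_sub01 {s t : ℝ} (h0 : 0 ≤ s) (hst : s ≤ t) (h1 : t ≤ 1) :
    Set.uIcc s t ⊆ Set.uIcc (0:ℝ) 1 := by
  rw [Set.uIcc_of_le hst, Set.uIcc_of_le (by norm_num : (0:ℝ) ≤ 1)]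
  exact Set.Icc_subset_Icc h0 h1

theorem key_ineq (q y α₁ α₂ : ℝ) (hq0 : 0 < q) (hq1 : q < 1) (hy : 0 < y)
    (hα1 : 0 < α₁) (h12 : α₁ < α₂) :
    (∫ u in (0:ℝ)..q, (1 - u / q) * u ^ (α₂ - 1) * (1 - u) ^ (y * α₂ - 1)) * eulerBeta α₁ (y * α₁)
    < (∫ u in (0:ℝ)..q, (1 - u / q) * u ^ (α₁ - 1) * (1 - u) ^ (y * α₁ - 1)) * eulerBeta α₂ (y * α₂) := by
  have hα2 : 0 < α₂ := hα1.trans h12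
  have hb1 : 0 < y * α₁ := mul_pos hy hα1
  have hb2 : 0 < y * α₂ := mul_pos hy hα2
  set w₁ : ℝ → ℝ := fun u => u ^ (α₁ - 1) * (1 - u) ^ (y * α₁ - 1) with hw₁
  set w₂ : ℝ → ℝ := fun u => u ^ (α₂ - 1) * (1 - u) ^ (y * α₂ - 1) with hw₂
  have hint₁ : IntervalIntegrable w₁ volume 0 1 := wInt hα1 hb1
  have hint₂ : IntervalIntegrable w₂ volume 0 1 := wInt hα2 hb2
  have hw₁pos : ∀ u ∈ Ioo (0:ℝ) 1, 0 < w₁ u := fun u hu =>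
    mul_pos (Real.rpow_pos_of_pos hu.1 _) (Real.rpow_pos_of_pos (by linarith [hu.2]) _)
  set D₁ : ℝ := eulerBeta α₁ (y * α₁) with hD₁
  set D₂ : ℝ := eulerBeta α₂ (y * α₂) with hD₂
  have hD₁pos : 0 < D₁ := eulerBeta_pos hα1 hb1
  have hD₂pos : 0 < D₂ := eulerBeta_pos hα2 hb2
  have hD₁eq : D₁ = ∫ u in (0:ℝ)..1, w₁ u := rfl
  have hD₂eq : D₂ = ∫ u in (0:ℝ)..1, w₂ u := rfl
  -- the mean/recurrence identity
  set m : ℝ := 1 / (1 + y) with hm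
  have hm0 : 0 < m := by positivity
  have hm1 : m < 1 := by
    rw [hm, div_lt_one (by linarith)]; linarith
  have hMean : ∀ α : ℝ, 0 < α →
      (∫ u in (0:ℝ)..1, u * (u ^ (α - 1) * (1 - u) ^ (y * α - 1))) = m * eulerBeta α (y * α) := by
    intro α hα
    have hcg : (∫ u in (0:ℝ)..1, u * (u ^ (α - 1) * (1 - u) ^ (y * α - 1)))
        = eulerBeta (α + 1) (y * α) := by
      rw [eulerBeta]
      apply intervalIntegral.integral_congr
      intro u hu
      rw [uIcc_of_le (by norm_num)] at hu
      rcases eq_or_lt_of_le hu.1 with rfl | hu0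
      · show (0:ℝ) * ((0:ℝ) ^ (α - 1) * (1 - 0) ^ (y * α - 1))
            = (0:ℝ) ^ (α + 1 - 1) * (1 - 0) ^ (y * α - 1)
        have hz : (0:ℝ) ^ (α + 1 - 1) = 0 :=
          Real.zero_rpow (by intro h; exact hα.ne' (by linarith))
        rw [hz]; ring
      · show u * (u ^ (α - 1) * (1 - u) ^ (y * α - 1))
            = u ^ (α + 1 - 1) * (1 - u) ^ (y * α - 1)
        have huu : u ^ (α + 1 - 1) = u ^ (α - 1) * u := by
          rw [show α + 1 - 1 = (α - 1) + 1 by ring, Real.rpow_add_one hu0.ne']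
        rw [huu]; ring
    have hrec := eulerBeta_rec hα (mul_pos hy hα)
    rw [hcg]
    have hne : α + y * α ≠ 0 := by positivity
    field_simp [hm]
    rw [hm, div_mul_eq_mul_div, one_mul, eq_div_iff (by linarith)]
    apply mul_left_cancel₀ hα.ne'
    rw [mul_comm y α] at hrec
    linear_combination hrec
  -- ρ and its properties
  set δ : ℝ := α₂ - α₁ with hδdef
  have hδ : 0 < δ := by simp [hδdef]; linarith
  have hyδ : 0 < y * δ := mul_pos hy hδ
  set ρ : ℝ → ℝ := fun u => u ^ δ * (1 - u) ^ (y * δ) with hρ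
  have hmδ : δ / (δ + y * δ) = m := by
    rw [hm]; field_simp
  have hρmono : StrictMonoOn ρ (Icc 0 m) := by
    have := rho_strictMonoOn hδ hyδ
    rwa [hmδ] at this
  have hρanti : StrictAntiOn ρ (Icc m 1) := by
    have := rho_strictAntiOn hδ hyδ
    rwa [hmδ] at this
  have hρcont : Continuous ρ := rho_cont hδ hyδ
  have hρ0 : ρ 0 = 0 := by
    simp [hρ, Real.zero_rpow hδ.ne']
  have hρ1 : ρ 1 = 0 := by
    simp [hρ, Real.zero_rpow hyδ.ne']
  -- w₂ = ρ * w₁ on Ioo 0 1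
  have hw21 : ∀ u ∈ Ioo (0:ℝ) 1, w₂ u = ρ u * w₁ u := by
    intro u hu
    have h1u : (0:ℝ) < 1 - u := by linarith [hu.2]
    have h1 : u ^ (α₂ - 1) = u ^ δ * u ^ (α₁ - 1) := by
      rw [← Real.rpow_add hu.1]; congr 1; rw [hδdef]; ring
    have h2 : (1-u) ^ (y * α₂ - 1) = (1-u) ^ (y * δ) * (1-u) ^ (y * α₁ - 1) := by
      rw [← Real.rpow_add h1u]; congr 1; rw [hδdef]; ring
    show u ^ (α₂ - 1) * (1 - u) ^ (y * α₂ - 1)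
        = (u ^ δ * (1 - u) ^ (y * δ)) * (u ^ (α₁ - 1) * (1 - u) ^ (y * α₁ - 1))
    rw [h1, h2]; ring
  set c : ℝ := D₂ / D₁ with hc
  have hcpos : 0 < c := div_pos hD₂pos hD₁pos
  have hcD : D₂ = c * D₁ := by
    rw [hc]; field_simp
  -- integrability of u * wᵢ
  have hintu₁ : IntervalIntegrable (fun u => u * w₁ u) volume 0 1 :=
    hint₁.continuousOn_mul continuous_id.continuousOn
  have hintu₂ : IntervalIntegrable (fun u => u * w₂ u) volume 0 1 :=
    hint₂.continuousOn_mul continuous_id.continuousOn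
  have hM₁ : (∫ u in (0:ℝ)..1, u * w₁ u) = m * D₁ := hMean α₁ hα1
  have hM₂ : (∫ u in (0:ℝ)..1, u * w₂ u) = m * D₂ := hMean α₂ hα2
  -- c < ρ m
  have hcρm : c < ρ m := by
    by_contra hcon
    push_neg at hcon
    have hub : ∀ u ∈ Ioo (0:ℝ) 1, w₂ u ≤ c * w₁ u := by
      intro u hu
      have hρle : ρ u ≤ ρ m := by
        rcases le_total u m with h | h
        · rcases eq_or_lt_of_le h with rfl | h'
          · exact le_refl _
          · exact (hρmono.monotoneOn ⟨hu.1.le, h⟩ ⟨hm0.le, le_refl m⟩ h)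
        · exact (hρanti.antitoneOn ⟨le_refl m, hm1.le⟩ ⟨h, hu.2.le⟩ h)
      rw [hw21 u hu]
      exact mul_le_mul_of_nonneg_right (hρle.trans hcon) (hw₁pos u hu).le
    have hstrict : ∀ u ∈ Ioo (0:ℝ) m, 0 < c * w₁ u - w₂ u := by
      intro u hu
      have hu1 : u ∈ Ioo (0:ℝ) 1 := ⟨hu.1, hu.2.trans hm1⟩
      have : ρ u < ρ m := hρmono ⟨hu.1.le, hu.2.le⟩ ⟨hm0.le, le_refl m⟩ hu.2
      rw [hw21 u hu1]
      have := mul_lt_mul_of_pos_right (this.trans_le hcon) (hw₁pos u hu1)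
      linarith
    have hdiffint : IntervalIntegrable (fun u => c * w₁ u - w₂ u) volume 0 1 :=
      (hint₁.const_mul c).sub hint₂
    have hzero : (∫ u in (0:ℝ)..1, (c * w₁ u - w₂ u)) = 0 := by
      rw [intervalIntegral.integral_sub (hint₁.const_mul c) hint₂,
        intervalIntegral.integral_const_mul, ← hD₁eq, ← hD₂eq, ← hcD]
      ring
    have hsplit : (∫ u in (0:ℝ)..1, (c * w₁ u - w₂ u))
        = (∫ u in (0:ℝ)..m, (c * w₁ u - w₂ u)) + ∫ u in m..1, (c * w₁ u - w₂ u) := by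
      rw [intervalIntegral.integral_add_adjacent_intervals
        (hdiffint.mono_set (uIcc_sub01 (le_refl 0) hm0.le hm1.le))
        (hdiffint.mono_set (uIcc_sub01 hm0.le hm1.le (le_refl 1)))]
    have hpos1 : 0 < ∫ u in (0:ℝ)..m, (c * w₁ u - w₂ u) := by
      exact intervalIntegral_pos_of_pos_on
        (hdiffint.mono_set (uIcc_sub01 (le_refl 0) hm0.le hm1.le)) hstrict hm0
    have hpos2 : 0 ≤ ∫ u in m..1, (c * w₁ u - w₂ u) := by
      apply integral_nonneg_of_Ioo hm1.le
      intro x hx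
      have hx1 : x ∈ Ioo (0:ℝ) 1 := ⟨hm0.trans hx.1, hx.2⟩
      linarith [hub x hx1]
    rw [hsplit] at hzero
    linarith
  -- crossing points
  obtain ⟨a, ha, hρa⟩ := intermediate_value_Ioo hm0.le hρcont.continuousOn
    (show c ∈ Ioo (ρ 0) (ρ m) from ⟨by rw [hρ0]; exact hcpos, hcρm⟩)
  obtain ⟨b, hb, hρb⟩ := intermediate_value_Ioo' hm1.le hρcont.continuousOn
    (show c ∈ Ioo (ρ 1) (ρ m) from ⟨by rw [hρ1]; exact hcpos, hcρm⟩)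
  have hab : a < b := ha.2.trans hb.1
  have ha0 : 0 < a := ha.1
  have hb1' : b < 1 := hb.2
  -- sign facts
  have sA : ∀ u ∈ Ioo (0:ℝ) a, ρ u < c := by
    intro u hu
    rw [← hρa]
    exact hρmono ⟨hu.1.le, (hu.2.trans ha.2).le⟩ ⟨ha0.le, ha.2.le⟩ hu.2
  have sB : ∀ u ∈ Ioo b 1, ρ u < c := by
    intro u hu
    rw [← hρb]
    exact hρanti ⟨hb.1.le, hb.2.le⟩ ⟨(hb.1.trans hu.1).le, hu.2.le⟩ hu.1
  have sAB : ∀ u ∈ Ioo a b, c < ρ u := by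
    intro u hu
    rcases le_total u m with h | h
    · rw [← hρa]
      exact hρmono ⟨ha0.le, ha.2.le⟩ ⟨(ha0.trans hu.1).le, h⟩ hu.1
    · rw [← hρb]
      exact hρanti ⟨h, (hu.2.trans hb1').le⟩ ⟨hb.1.le, hb1'.le⟩ hu.2
  -- Φ and its properties
  set Φ : ℝ → ℝ := fun u => max (1 - u/q) 0 with hΦdef
  have hΦcont : Continuous Φ :=
    (continuous_const.sub (continuous_id.div_const q)).max continuous_const
  have hΦconv : ConvexOn ℝ univ Φ := phi_convex hq0
  have hΦle : ∀ u : ℝ, u ≤ q → Φ u = 1 - u/q := by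
    intro u hu
    apply max_eq_left
    rw [sub_nonneg, div_le_one hq0]; exact hu
  have hΦge : ∀ u : ℝ, q ≤ u → Φ u = 0 := by
    intro u hu
    exact max_eq_right (by rw [sub_nonpos, le_div_iff₀ hq0]; linarith)
  have hΦw₁ : IntervalIntegrable (fun u => Φ u * w₁ u) volume 0 1 :=
    hint₁.continuousOn_mul hΦcont.continuousOn
  have hΦw₂ : IntervalIntegrable (fun u => Φ u * w₂ u) volume 0 1 :=
    hint₂.continuousOn_mul hΦcont.continuousOn
  -- N rewrite
  have hNq : ∀ ww : ℝ → ℝ, IntervalIntegrable ww volume 0 1 →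
      (∫ u in (0:ℝ)..1, Φ u * ww u) = ∫ u in (0:ℝ)..q, (1 - u/q) * ww u := by
    intro ww hww
    have hi1 : IntervalIntegrable (fun u => Φ u * ww u) volume 0 q :=
      (hww.continuousOn_mul hΦcont.continuousOn).mono_set (uIcc_sub01 (le_refl 0) hq0.le hq1.le)
    have hi2 : IntervalIntegrable (fun u => Φ u * ww u) volume q 1 :=
      (hww.continuousOn_mul hΦcont.continuousOn).mono_set (uIcc_sub01 hq0.le hq1.le (le_refl 1))
    rw [← intervalIntegral.integral_add_adjacent_intervals hi1 hi2]
    have h2z : (∫ u in q..1, Φ u * ww u) = ∫ u in q..1, (0:ℝ) := by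
      apply intervalIntegral.integral_congr
      intro u hu
      rw [uIcc_of_le hq1.le] at hu
      simp [hΦge u hu.1]
    rw [h2z, intervalIntegral.integral_zero, add_zero]
    apply intervalIntegral.integral_congr
    intro u hu
    rw [uIcc_of_le hq0.le] at hu
    show Φ u * ww u = (1 - u / q) * ww u
    rw [hΦle u hu.2]
  -- the secant line
  set sl : ℝ := (Φ b - Φ a)/(b - a) with hsl
  set L : ℝ → ℝ := fun u => Φ a + sl * (u - a) with hLdef
  have hLcont : Continuous L :=
    continuous_const.add (continuous_const.mul (continuous_id.sub continuous_const))
  -- the key pointwise function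
  set h : ℝ → ℝ := fun u => (Φ u - L u) * (w₂ u - c * w₁ u) with hhdef
  have hfac : ∀ u ∈ Ioo (0:ℝ) 1, w₂ u - c * w₁ u = (ρ u - c) * w₁ u := by
    intro u hu; rw [hw21 u hu]; ring
  have hnp : ∀ u ∈ Ioo (0:ℝ) 1, h u ≤ 0 := by
    intro u hu
    show (Φ u - L u) * (w₂ u - c * w₁ u) ≤ 0
    rcases lt_trichotomy u a with h1 | h1 | h1
    · have f2 : w₂ u - c * w₁ u < 0 := by
        rw [hfac u hu]
        exact mul_neg_of_neg_of_pos (by linarith [sA u ⟨hu.1, h1⟩]) (hw₁pos u hu)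
      have f1 : 0 ≤ Φ u - L u := by
        have := secant_left hΦconv hab h1
        simp only [hLdef, hsl]
        linarith [this]
      exact mul_nonpos_iff.mpr (Or.inl ⟨f1, f2.le⟩)
    · have f2 : w₂ u - c * w₁ u = 0 := by
        rw [hfac u hu, h1, hρa]; ring
      rw [f2]; simp
    · rcases lt_trichotomy u b with h2 | h2 | h2
      · have f2 : 0 ≤ w₂ u - c * w₁ u := by
          rw [hfac u hu]
          exact (mul_pos (by linarith [sAB u ⟨h1, h2⟩]) (hw₁pos u hu)).le
        have f1 : Φ u - L u ≤ 0 := by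
          have := secant_mid hΦconv hab h1.le h2.le
          simp only [hLdef, hsl]
          linarith [this]
        exact mul_nonpos_iff.mpr (Or.inr ⟨f1, f2⟩)
      · have f2 : w₂ u - c * w₁ u = 0 := by
          rw [hfac u hu, h2, hρb]; ring
        rw [f2]; simp
      · have f2 : w₂ u - c * w₁ u < 0 := by
          rw [hfac u hu]
          exact mul_neg_of_neg_of_pos (by linarith [sB u ⟨h2, hu.2⟩]) (hw₁pos u hu)
        have f1 : 0 ≤ Φ u - L u := by
          have := secant_right hΦconv hab h2
          simp only [hLdef, hsl]
          linarith [this]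
        exact mul_nonpos_iff.mpr (Or.inl ⟨f1, f2.le⟩)
  -- rewrite h as a combination with known integrals
  have hLw : ∀ u : ℝ, h u = (Φ u * w₂ u - c * (Φ u * w₁ u))
      - ((Φ a - sl * a) * (w₂ u - c * w₁ u) + sl * (u * w₂ u - c * (u * w₁ u))) := by
    intro u; simp only [hhdef, hLdef]; ring
  have hI1 : IntervalIntegrable (fun u => Φ u * w₂ u - c * (Φ u * w₁ u)) volume 0 1 :=
    hΦw₂.sub (hΦw₁.const_mul c)
  have hI2 : IntervalIntegrable (fun u => w₂ u - c * w₁ u) volume 0 1 :=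
    hint₂.sub (hint₁.const_mul c)
  have hI3 : IntervalIntegrable (fun u => u * w₂ u - c * (u * w₁ u)) volume 0 1 :=
    hintu₂.sub (hintu₁.const_mul c)
  have hI4 : IntervalIntegrable
      (fun u => (Φ a - sl * a) * (w₂ u - c * w₁ u) + sl * (u * w₂ u - c * (u * w₁ u)))
      volume 0 1 := (hI2.const_mul _).add (hI3.const_mul _)
  have hhint : IntervalIntegrable h volume 0 1 := by
    have : h = fun u => (Φ u * w₂ u - c * (Φ u * w₁ u))
        - ((Φ a - sl * a) * (w₂ u - c * w₁ u) + sl * (u * w₂ u - c * (u * w₁ u))) :=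
      funext hLw
    rw [this]; exact hI1.sub hI4
  have hEval : (∫ u in (0:ℝ)..1, h u)
      = (∫ u in (0:ℝ)..1, Φ u * w₂ u) - c * ∫ u in (0:ℝ)..1, Φ u * w₁ u := by
    rw [intervalIntegral.integral_congr (fun u _ => hLw u),
      intervalIntegral.integral_sub hI1 hI4,
      intervalIntegral.integral_sub hΦw₂ (hΦw₁.const_mul c),
      intervalIntegral.integral_const_mul,
      intervalIntegral.integral_add (hI2.const_mul _) (hI3.const_mul _),
      intervalIntegral.integral_const_mul, intervalIntegral.integral_const_mul,
      intervalIntegral.integral_sub hint₂ (hint₁.const_mul c),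
      intervalIntegral.integral_const_mul,
      intervalIntegral.integral_sub hintu₂ (hintu₁.const_mul c),
      intervalIntegral.integral_const_mul, hM₁, hM₂, ← hD₁eq, ← hD₂eq, hcD]
    ring
  -- a subinterval where h is strictly negative
  obtain ⟨s₀, t₀, hs₀, ht₀, hst, hneg⟩ :
      ∃ s₀ t₀ : ℝ, 0 ≤ s₀ ∧ t₀ ≤ 1 ∧ s₀ < t₀ ∧ ∀ u ∈ Ioo s₀ t₀, h u < 0 := by
    rcases le_or_gt q a with hqa | hqa
    · refine ⟨0, q, le_refl 0, hq1.le, hq0, ?_⟩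
      intro u hu
      have hu1 : u ∈ Ioo (0:ℝ) 1 := ⟨hu.1, hu.2.trans hq1⟩
      have hΦa : Φ a = 0 := hΦge a hqa
      have hΦb : Φ b = 0 := hΦge b (hqa.trans hab.le)
      have hslv : sl = 0 := by rw [hsl, hΦa, hΦb]; simp
      have hLu : L u = 0 := by simp only [hLdef, hslv, hΦa]; ring
      have hΦu : Φ u = 1 - u/q := hΦle u hu.2.le
      have f1 : 0 < Φ u - L u := by
        rw [hΦu, hLu]
        have : u/q < 1 := (div_lt_one hq0).mpr hu.2
        linarith
      have f2 : w₂ u - c * w₁ u < 0 := by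
        rw [hfac u hu1]
        exact mul_neg_of_neg_of_pos
          (by linarith [sA u ⟨hu.1, lt_of_lt_of_le hu.2 hqa⟩]) (hw₁pos u hu1)
      exact mul_neg_of_pos_of_neg f1 f2
    · rcases le_or_gt b q with hbq | hbq
      · refine ⟨q, 1, hq0.le, le_refl 1, hq1, ?_⟩
        intro u hu
        have hu1 : u ∈ Ioo (0:ℝ) 1 := ⟨hq0.trans hu.1, hu.2⟩
        have hΦa : Φ a = 1 - a/q := hΦle a (hab.le.trans hbq)
        have hΦb : Φ b = 1 - b/q := hΦle b hbq
        have hslv : sl = -(1/q) := by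
          rw [hsl, hΦa, hΦb, div_eq_iff (by intro hc0; rw [sub_eq_zero] at hc0; exact absurd hc0.symm hab.ne : b - a ≠ 0)]
          field_simp
          try ring
        have hLu : L u = 1 - u/q := by
          simp only [hLdef, hslv, hΦa]
          field_simp
          try ring
        have hΦu : Φ u = 0 := hΦge u hu.1.le
        have f1 : 0 < Φ u - L u := by
          rw [hΦu, hLu]
          have : 1 < u/q := (one_lt_div hq0).mpr hu.1
          linarith
        have f2 : w₂ u - c * w₁ u < 0 := by
          rw [hfac u hu1]
          exact mul_neg_of_neg_of_pos
            (by linarith [sB u ⟨lt_of_le_of_lt hbq hu.1, hu.2⟩]) (hw₁pos u hu1)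
        exact mul_neg_of_pos_of_neg f1 f2
      · refine ⟨q, b, hq0.le, hb1'.le, hbq, ?_⟩
        intro u hu
        have hu1 : u ∈ Ioo (0:ℝ) 1 := ⟨hq0.trans hu.1, hu.2.trans hb1'⟩
        have hΦa : Φ a = 1 - a/q := hΦle a hqa.le
        have hΦb : Φ b = 0 := hΦge b hbq.le
        have hΦu : Φ u = 0 := hΦge u hu.1.le
        have haq : 0 < 1 - a/q := by
          have : a/q < 1 := (div_lt_one hq0).mpr hqa
          linarith
        have hLu : L u = (1 - a/q) * ((b - u) / (b - a)) := by
          simp only [hLdef, hsl, hΦa, hΦb]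
          have hba : b - a ≠ 0 := sub_ne_zero.mpr hab.ne'
          have hqne : q ≠ 0 := hq0.ne'
          field_simp
          ring
        have f1 : Φ u - L u < 0 := by
          rw [hΦu, hLu]
          have : 0 < (1 - a/q) * ((b - u)/(b - a)) :=
            mul_pos haq (div_pos (by linarith [hu.2]) (by linarith))
          linarith
        have f2 : 0 < w₂ u - c * w₁ u := by
          rw [hfac u hu1]
          exact mul_pos (by linarith [sAB u ⟨hqa.trans hu.1, hu.2⟩]) (hw₁pos u hu1)
        exact mul_neg_of_neg_of_pos f1 f2
  -- strict negativity of the full integral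
  have hst01 : s₀ ≤ 1 := hst.le.trans ht₀
  have ht00 : 0 ≤ t₀ := hs₀.trans hst.le
  have e1 : (∫ u in (0:ℝ)..s₀, h u) + (∫ u in s₀..t₀, h u) = ∫ u in (0:ℝ)..t₀, h u :=
    intervalIntegral.integral_add_adjacent_intervals
      (hhint.mono_set (uIcc_sub01 (le_refl 0) hs₀ hst01))
      (hhint.mono_set (uIcc_sub01 hs₀ hst.le ht₀))
  have e2 : (∫ u in (0:ℝ)..t₀, h u) + (∫ u in t₀..1, h u) = ∫ u in (0:ℝ)..1, h u :=
    intervalIntegral.integral_add_adjacent_intervals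
      (hhint.mono_set (uIcc_sub01 (le_refl 0) ht00 ht₀))
      (hhint.mono_set (uIcc_sub01 ht00 ht₀ (le_refl 1)))
  have b1 : (∫ u in (0:ℝ)..s₀, h u) ≤ 0 :=
    integral_nonpos_of_Ioo hs₀ (fun x hx => hnp x ⟨hx.1, lt_of_lt_of_le (hx.2.trans_le hst.le) ht₀⟩)
  have b3 : (∫ u in t₀..1, h u) ≤ 0 :=
    integral_nonpos_of_Ioo ht₀ (fun x hx => hnp x ⟨lt_of_le_of_lt ht00 hx.1, hx.2⟩)
  have b2 : (∫ u in s₀..t₀, h u) < 0 := by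
    have hpos := intervalIntegral_pos_of_pos_on (f := fun u => -h u)
      ((hhint.mono_set (uIcc_sub01 hs₀ hst.le ht₀)).neg)
      (fun x hx => neg_pos.mpr (hneg x hx)) hst
    rw [intervalIntegral.integral_neg] at hpos
    linarith
  have hEneg : (∫ u in (0:ℝ)..1, h u) < 0 := by linarith
  -- conclude
  have hNN : (∫ u in (0:ℝ)..1, Φ u * w₂ u) < c * ∫ u in (0:ℝ)..1, Φ u * w₁ u := by
    rw [hEval] at hEneg; linarith
  have g₂ : (∫ u in (0:ℝ)..q, (1 - u / q) * u ^ (α₂ - 1) * (1 - u) ^ (y * α₂ - 1))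
      = ∫ u in (0:ℝ)..1, Φ u * w₂ u := by
    rw [hNq w₂ hint₂]
    apply intervalIntegral.integral_congr
    intro u hu
    show (1 - u / q) * u ^ (α₂ - 1) * (1 - u) ^ (y * α₂ - 1)
        = (1 - u / q) * (u ^ (α₂ - 1) * (1 - u) ^ (y * α₂ - 1))
    ring
  have g₁ : (∫ u in (0:ℝ)..q, (1 - u / q) * u ^ (α₁ - 1) * (1 - u) ^ (y * α₁ - 1))
      = ∫ u in (0:ℝ)..1, Φ u * w₁ u := by
    rw [hNq w₁ hint₁]
    apply intervalIntegral.integral_congr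
    intro u hu
    show (1 - u / q) * u ^ (α₁ - 1) * (1 - u) ^ (y * α₁ - 1)
        = (1 - u / q) * (u ^ (α₁ - 1) * (1 - u) ^ (y * α₁ - 1))
    ring
  rw [g₁, g₂]
  have := mul_lt_mul_of_pos_right hNN hD₁pos
  calc (∫ u in (0:ℝ)..1, Φ u * w₂ u) * D₁
      < c * (∫ u in (0:ℝ)..1, Φ u * w₁ u) * D₁ := this
    _ = (∫ u in (0:ℝ)..1, Φ u * w₁ u) * D₂ := by rw [hcD]; ring

end Aux

/-- The regularized incomplete beta function
`I_x(a,b) = (1/B(a,b)) ∫₀^x t^(a-1) (1-t)^(b-1) dt`. -/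
noncomputable def regIncBeta (x a b : ℝ) : ℝ :=
  (1 / eulerBeta a b) * ∫ t in (0:ℝ)..x, t ^ (a - 1) * (1 - t) ^ (b - 1)

/-- Lemma 5: for fixed `q ∈ (0,1)` and `y > 0`, the function
`g(α) = (1/B(α, yα)) ∫₀^q (1 - u/q) u^(α-1) (1-u)^(yα-1) du` is strictly decreasing
on `(0,∞)`; equivalently, `1 - I_q(α, yα) + (1/((1+y)q)) I_q(α+1, yα)` is strictly
increasing on `(0,∞)`. -/
theorem data_offloading_ratio_increases_with_alpha
    (q y : ℝ) (hq : q ∈ Set.Ioo (0:ℝ) 1) (hy : 0 < y) :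
    StrictAntiOn (fun α : ℝ =>
      (1 / eulerBeta α (y * α)) *
        ∫ u in (0:ℝ)..q, (1 - u / q) * u ^ (α - 1) * (1 - u) ^ (y * α - 1))
      (Set.Ioi 0)
    ∧
    StrictMonoOn (fun α : ℝ =>
      1 - regIncBeta q α (y * α) + (1 / ((1 + y) * q)) * regIncBeta q (α + 1) (y * α))
      (Set.Ioi 0) := by

  obtain ⟨hq0, hq1⟩ := hq
  have hanti : StrictAntiOn (fun α : ℝ =>
      (1 / eulerBeta α (y * α)) *
        ∫ u in (0:ℝ)..q, (1 - u / q) * u ^ (α - 1) * (1 - u) ^ (y * α - 1))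
      (Set.Ioi 0) := by
    intro α₁ hα₁ α₂ hα₂ h12
    rw [Set.mem_Ioi] at hα₁ hα₂
    have hk := key_ineq q y α₁ α₂ hq0 hq1 hy hα₁ h12
    have hD₁ : 0 < eulerBeta α₁ (y * α₁) := eulerBeta_pos hα₁ (mul_pos hy hα₁)
    have hD₂ : 0 < eulerBeta α₂ (y * α₂) := eulerBeta_pos hα₂ (mul_pos hy hα₂)
    simp only
    rw [one_div_mul_eq_div, one_div_mul_eq_div, div_lt_div_iff₀ hD₂ hD₁]
    exact hk
  constructor
  · exact hanti
  · -- rewrite the second function as 1 - (first function)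
    have hkey : ∀ α : ℝ, 0 < α →
        1 - regIncBeta q α (y * α) + (1 / ((1 + y) * q)) * regIncBeta q (α + 1) (y * α)
        = 1 - ((1 / eulerBeta α (y * α)) *
            ∫ u in (0:ℝ)..q, (1 - u / q) * u ^ (α - 1) * (1 - u) ^ (y * α - 1)) := by
      intro α hα
      have hb : 0 < y * α := mul_pos hy hα
      have hD : 0 < eulerBeta α (y * α) := eulerBeta_pos hα hb
      have hw : IntervalIntegrable (fun u : ℝ => u ^ (α - 1) * (1 - u) ^ (y * α - 1))
          volume 0 1 := wInt hα hb
      have hwq : IntervalIntegrable (fun u : ℝ => u ^ (α - 1) * (1 - u) ^ (y * α - 1))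
          volume 0 q := hw.mono_set (uIcc_sub01 (le_refl 0) hq0.le hq1.le)
      have huwq : IntervalIntegrable
          (fun u : ℝ => u * (u ^ (α - 1) * (1 - u) ^ (y * α - 1))) volume 0 q :=
        (hw.continuousOn_mul continuous_id.continuousOn).mono_set
          (uIcc_sub01 (le_refl 0) hq0.le hq1.le)
      have hB' : eulerBeta (α + 1) (y * α) = eulerBeta α (y * α) / (1 + y) := by
        have hrec := eulerBeta_rec hα hb
        rw [eq_div_iff (by linarith : (1:ℝ) + y ≠ 0)]
        apply mul_left_cancel₀ hα.ne'
        linear_combination hrec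
      have hIq2 : (∫ u in (0:ℝ)..q, u ^ (α + 1 - 1) * (1 - u) ^ (y * α - 1))
          = ∫ u in (0:ℝ)..q, u * (u ^ (α - 1) * (1 - u) ^ (y * α - 1)) := by
        apply intervalIntegral.integral_congr
        intro u hu
        rw [Set.uIcc_of_le hq0.le] at hu
        rcases eq_or_lt_of_le hu.1 with rfl | hu0
        · show (0:ℝ) ^ (α + 1 - 1) * (1 - 0) ^ (y * α - 1)
              = (0:ℝ) * ((0:ℝ) ^ (α - 1) * (1 - 0) ^ (y * α - 1))
          have hz : (0:ℝ) ^ (α + 1 - 1) = 0 :=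
            Real.zero_rpow (by intro h; exact hα.ne' (by linarith))
          rw [hz]; ring
        · show u ^ (α + 1 - 1) * (1 - u) ^ (y * α - 1)
              = u * (u ^ (α - 1) * (1 - u) ^ (y * α - 1))
          have huu : u ^ (α + 1 - 1) = u ^ (α - 1) * u := by
            rw [show α + 1 - 1 = (α - 1) + 1 by ring, Real.rpow_add_one hu0.ne']
          rw [huu]; ring
      have hsplit : (∫ u in (0:ℝ)..q, (1 - u / q) * u ^ (α - 1) * (1 - u) ^ (y * α - 1))
          = (∫ u in (0:ℝ)..q, u ^ (α - 1) * (1 - u) ^ (y * α - 1))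
            - (1/q) * ∫ u in (0:ℝ)..q, u * (u ^ (α - 1) * (1 - u) ^ (y * α - 1)) := by
        rw [← intervalIntegral.integral_const_mul,
          ← intervalIntegral.integral_sub hwq (huwq.const_mul (1/q))]
        apply intervalIntegral.integral_congr
        intro u hu
        show (1 - u / q) * u ^ (α - 1) * (1 - u) ^ (y * α - 1)
            = u ^ (α - 1) * (1 - u) ^ (y * α - 1)
              - (1/q) * (u * (u ^ (α - 1) * (1 - u) ^ (y * α - 1)))
        field_simp
      rw [regIncBeta, regIncBeta, hB', hIq2, hsplit]
      have hDne : eulerBeta α (y * α) ≠ 0 := hD.ne'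
      have hyne : (1:ℝ) + y ≠ 0 := by linarith
      have hqne : q ≠ 0 := hq0.ne'
      field_simp
      ring
    intro α₁ hα₁ α₂ hα₂ h12
    simp only
    rw [hkey α₁ (Set.mem_Ioi.mp hα₁), hkey α₂ (Set.mem_Ioi.mp hα₂)]
    have := hanti hα₁ hα₂ h12
    simp only at this
    linarith
end

section
/- Fix m ∈ (0,1) and q ∈ (0,1), and set y = (1−m)/m. For v ∈ (0, m(1−m)), define α(v) = m²(1−m)/v − m and R(v) = 1 − (1/B(α(v), y·α(v))) · ∫₀^q (1 − u/q) · u^{α(v)−1} (1−u)^{y·α(v)−1} du. Then R(v) is strictly decreasing in v on (0, m(1−m)). (This is the analytic core of Proposition 2: with the mean communication duration fixed, the beta-approximated data offloading ratio strictly increases as the variance of the communication duration decreases, and hence increases with the user moving speed.) -/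
open MeasureTheory Set

/-- The moment-matched first beta shape parameter, for normalized mean `m`
and normalized variance `v`: `α(v) = m²(1-m)/v - m`. -/
noncomputable def alphaOf (m v : ℝ) : ℝ := m ^ 2 * (1 - m) / v - m

open intervalIntegral

/-- the (unnormalized) beta density -/
noncomputable def bf (a b : ℝ) : ℝ → ℝ := fun u => u ^ (a - 1) * (1 - u) ^ (b - 1)

lemma eulerBeta_eq (a b : ℝ) : eulerBeta a b = ∫ t in (0:ℝ)..1, bf a b t := rfl

lemma bf_pos {a b u : ℝ} (hu : u ∈ Ioo (0:ℝ) 1) : 0 < bf a b u :=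
  mul_pos (Real.rpow_pos_of_pos hu.1 _) (Real.rpow_pos_of_pos (by linarith [hu.2]) _)

lemma bf_contOn (a b : ℝ) : ContinuousOn (bf a b) (Ioo 0 1) := by
  apply ContinuousOn.mul
  · exact continuousOn_id.rpow_const fun u hu => Or.inl hu.1.ne'
  · refine (continuousOn_const.sub continuousOn_id).rpow_const fun u hu => Or.inl ?_
    have : (1:ℝ) - u ≠ 0 := by intro h; rw [sub_eq_zero] at h; exact hu.2.ne h.symm
    exact this

lemma bf_intOn {a b : ℝ} (ha : 0 < a) (hb : 0 < b) :
    IntervalIntegrable (bf a b) volume 0 1 := by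
  have half : ∀ a b : ℝ, 0 < a → IntervalIntegrable (bf a b) volume 0 (1/2) := by
    intro a b ha
    have h1 : IntervalIntegrable (fun u : ℝ => u ^ (a - 1)) volume 0 (1/2) :=
      intervalIntegrable_rpow' (by linarith)
    have h2 : ContinuousOn (fun u : ℝ => (1 - u) ^ (b - 1)) (uIcc (0:ℝ) (1/2)) := by
      refine (continuousOn_const.sub continuousOn_id).rpow_const fun u hu => Or.inl ?_
      rw [uIcc_of_le (by norm_num)] at hu
      have : (1:ℝ) - u ≠ 0 := by intro h; rw [sub_eq_zero] at h; norm_num [← h] at hu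
      exact this
    exact h1.mul_continuousOn h2
  have h2 : IntervalIntegrable (bf a b) volume (1/2) 1 := by
    have := (half b a hb).comp_sub_left 1
    norm_num at this
    have heq : (fun x : ℝ => bf b a (1 - x)) = bf a b := by
      funext x; simp only [bf, sub_sub_cancel]; ring
    rw [heq] at this
    exact this.symm
  exact (half a b ha).trans h2

lemma bf_intOn' {a b c : ℝ} (ha : 0 < a) (hb : 0 < b) (hc0 : 0 ≤ c) (hc1 : c ≤ 1) :
    IntervalIntegrable (bf a b) volume 0 c := by
  refine (bf_intOn ha hb).mono_set ?_
  rw [uIcc_of_le hc0, uIcc_of_le zero_le_one]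
  exact Icc_subset_Icc le_rfl hc1

lemma beta_mean {a b : ℝ} (ha : 0 < a) (hb : 0 < b) :
    ∫ u in (0:ℝ)..1, u * bf a b u = a / (a + b) * eulerBeta a b := by
  set g : ℝ → ℝ := fun u => u ^ a * (1 - u) ^ b with hg
  have hgc : ContinuousOn g (Icc 0 1) := by
    apply ContinuousOn.mul
    · exact continuousOn_id.rpow_const fun u hu => Or.inr ha.le
    · exact (continuousOn_const.sub continuousOn_id).rpow_const fun u hu => Or.inr hb.le
  have hderiv : ∀ u ∈ Ioo (0:ℝ) 1, HasDerivAt g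
      (a * u ^ (a-1) * (1-u) ^ b - u ^ a * (b * (1-u) ^ (b-1))) u := by
    intro u hu
    have h1 : HasDerivAt (fun u : ℝ => u ^ a) (a * u ^ (a-1)) u :=
      Real.hasDerivAt_rpow_const (Or.inl hu.1.ne')
    have h2 : HasDerivAt (fun u : ℝ => (1 - u) ^ b) (-(b * (1-u) ^ (b-1))) u := by
      have hc : HasDerivAt (fun u : ℝ => 1 - u) (-1) u := by
        simpa using (hasDerivAt_id u).const_sub 1
      have := (Real.hasDerivAt_rpow_const (x := 1 - u) (p := b)
        (Or.inl (by intro h; rw [sub_eq_zero] at h; exact hu.2.ne h.symm))).comp u hc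
      simpa [mul_comm, Function.comp_def] using this
    have := h1.mul h2
    refine this.congr_deriv ?_
    ring
  have hint : IntervalIntegrable
      (fun u : ℝ => a * u ^ (a-1) * (1-u) ^ b - u ^ a * (b * (1-u) ^ (b-1))) volume 0 1 := by
    have e1 : (fun u : ℝ => a * u ^ (a-1) * (1-u) ^ b - u ^ a * (b * (1-u) ^ (b-1)))
        = fun u => a * bf a (b+1) u - b * bf (a+1) b u := by
      funext u; simp only [bf, add_sub_cancel_right]; ring
    rw [e1]
    exact ((bf_intOn ha (by linarith)).const_mul a).sub ((bf_intOn (by linarith) hb).const_mul b)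
  have h0 : (∫ u in (0:ℝ)..1, (a * u ^ (a-1) * (1-u) ^ b - u ^ a * (b * (1-u) ^ (b-1))))
      = g 1 - g 0 := integral_eq_sub_of_hasDerivAt_of_le zero_le_one hgc hderiv hint
  have hg1 : g 1 = 0 := by simp [hg, Real.zero_rpow hb.ne']
  have hg0 : g 0 = 0 := by simp [hg, Real.zero_rpow ha.ne']
  rw [hg1, hg0, sub_zero] at h0
  -- rewrite the two pieces
  have e1 : (fun u : ℝ => a * u ^ (a-1) * (1-u) ^ b - u ^ a * (b * (1-u) ^ (b-1)))
      = fun u => a * bf a (b+1) u - b * bf (a+1) b u := by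
    funext u; simp only [bf, add_sub_cancel_right]; ring
  rw [e1] at h0
  have hi1 : IntervalIntegrable (fun u => a * bf a (b+1) u) volume 0 1 :=
    (bf_intOn ha (by linarith)).const_mul a
  have hi2 : IntervalIntegrable (fun u => b * bf (a+1) b u) volume 0 1 :=
    (bf_intOn (by linarith) hb).const_mul b
  rw [integral_sub hi1 hi2, intervalIntegral.integral_const_mul, intervalIntegral.integral_const_mul, sub_eq_zero] at h0
  -- identify the integrals with B and M
  set M : ℝ := ∫ u in (0:ℝ)..1, u * bf a b u with hM
  have eM : (∫ u in (0:ℝ)..1, bf (a+1) b u) = M := by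
    rw [hM]
    apply integral_congr
    intro u hu
    rw [uIcc_of_le zero_le_one] at hu
    simp only [bf, add_sub_cancel_right]
    rcases eq_or_lt_of_le hu.1 with h | h
    · rw [← h]; rw [Real.zero_rpow ha.ne']; simp
    · rw [show a = 1 + (a - 1) by ring, Real.rpow_add h, Real.rpow_one]; ring_nf
  have eB : (∫ u in (0:ℝ)..1, bf a (b+1) u) = eulerBeta a b - M := by
    rw [hM, eulerBeta_eq, ← integral_sub (bf_intOn ha hb)]
    · apply integral_congr
      intro u hu
      rw [uIcc_of_le zero_le_one] at hu
      simp only [bf, add_sub_cancel_right]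
      rcases eq_or_lt_of_le hu.2 with h | h
      · rw [h]; simp [Real.zero_rpow hb.ne']
      · rw [show b = 1 + (b - 1) by ring, Real.rpow_add (by linarith), Real.rpow_one]; ring
    · exact (bf_intOn ha hb).continuousOn_mul (continuous_id.continuousOn)
  rw [eM, eB] at h0
  have hab : a + b ≠ 0 := by positivity
  field_simp
  linarith [h0]
lemma parts_id {h : ℝ → ℝ} (hint : IntervalIntegrable h volume 0 1)
    (hcont : ContinuousOn h (Ioo 0 1)) {c : ℝ} (hc : 0 < c) (hc1 : c ≤ 1) :
    ∫ u in (0:ℝ)..c, (c - u) * h u = ∫ x in (0:ℝ)..c, ∫ u in (0:ℝ)..x, h u := by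
  have hmono : ∀ d : ℝ, 0 ≤ d → d ≤ 1 → IntervalIntegrable h volume 0 d := by
    intro d h0 h1
    refine hint.mono_set ?_
    rw [uIcc_of_le h0, uIcc_of_le zero_le_one]
    exact Icc_subset_Icc le_rfl h1
  have huh : IntervalIntegrable (fun u => u * h u) volume 0 1 :=
    hint.continuousOn_mul continuous_id.continuousOn
  have huhmono : ∀ d : ℝ, 0 ≤ d → d ≤ 1 → IntervalIntegrable (fun u => u * h u) volume 0 d := by
    intro d h0 h1
    refine huh.mono_set ?_
    rw [uIcc_of_le h0, uIcc_of_le zero_le_one]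
    exact Icc_subset_Icc le_rfl h1
  set P : ℝ → ℝ := fun x => ∫ u in (0:ℝ)..x, h u with hP
  set Q : ℝ → ℝ := fun x => ∫ u in (0:ℝ)..x, u * h u with hQ
  have hPc : ContinuousOn P (Icc 0 1) := by
    have := continuousOn_primitive_interval' hint (by rw [uIcc_of_le zero_le_one]; exact ⟨le_rfl, zero_le_one⟩)
    rwa [uIcc_of_le zero_le_one] at this
  have hQc : ContinuousOn Q (Icc 0 1) := by
    have := continuousOn_primitive_interval' huh (by rw [uIcc_of_le zero_le_one]; exact ⟨le_rfl, zero_le_one⟩)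
    rwa [uIcc_of_le zero_le_one] at this
  have hPi : IntervalIntegrable P volume 0 1 := by
    apply ContinuousOn.intervalIntegrable
    rwa [uIcc_of_le zero_le_one]
  have hPimono : ∀ d : ℝ, 0 ≤ d → d ≤ 1 → IntervalIntegrable P volume 0 d := by
    intro d h0 h1
    refine hPi.mono_set ?_
    rw [uIcc_of_le h0, uIcc_of_le zero_le_one]
    exact Icc_subset_Icc le_rfl h1
  set S : ℝ → ℝ := fun x => ∫ t in (0:ℝ)..x, P t with hS
  have hSc : ContinuousOn S (Icc 0 1) := by
    have := continuousOn_primitive_interval' hPi (by rw [uIcc_of_le zero_le_one]; exact ⟨le_rfl, zero_le_one⟩)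
    rwa [uIcc_of_le zero_le_one] at this
  set Φ : ℝ → ℝ := fun x => x * P x - Q x - S x with hΦ
  have hΦc : ContinuousOn Φ (Icc 0 1) :=
    ((continuousOn_id.mul hPc).sub hQc).sub hSc
  have hΦd : ∀ x ∈ Ioo (0:ℝ) 1, HasDerivAt Φ 0 x := by
    intro x hx
    have hmeas : StronglyMeasurableAtFilter h (nhds x) :=
      hcont.stronglyMeasurableAtFilter isOpen_Ioo x hx
    have hca : ContinuousAt h x := hcont.continuousAt (Ioo_mem_nhds hx.1 hx.2)
    have hP' : HasDerivAt P (h x) x :=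
      integral_hasDerivAt_right (hmono x hx.1.le hx.2.le) hmeas hca
    have hQ' : HasDerivAt Q (x * h x) x := by
      refine integral_hasDerivAt_right (huhmono x hx.1.le hx.2.le) ?_ ?_
      · exact ((continuousOn_id.mul hcont).stronglyMeasurableAtFilter isOpen_Ioo x hx)
      · exact continuousAt_id.mul hca
    have hS' : HasDerivAt S (P x) x := by
      refine integral_hasDerivAt_right (hPimono x hx.1.le hx.2.le) ?_ ?_
      · exact ((hPc.mono Ioo_subset_Icc_self).stronglyMeasurableAtFilter isOpen_Ioo x hx)
      · exact hPc.continuousAt (Icc_mem_nhds hx.1 hx.2)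
    have := (((hasDerivAt_id x).mul hP').sub hQ').sub hS'
    refine this.congr_deriv ?_
    simp only [id_eq]
    ring
  -- Φ is constant on (0,1]
  have hconst : ∀ ε ∈ Ioc (0:ℝ) 1, Φ 1 = Φ ε := by
    intro ε hε
    have := constant_of_has_deriv_right_zero (f := Φ) (a := ε) (b := 1)
      (hΦc.mono (Icc_subset_Icc hε.1.le le_rfl))
      (fun x hx => (hΦd x ⟨lt_of_lt_of_le hε.1 hx.1, hx.2⟩).hasDerivWithinAt)
    exact this 1 ⟨hε.2, le_rfl⟩
  have hΦ0 : Φ 0 = 0 := by simp [hΦ, hP, hQ, hS]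
  -- Φ 1 = Φ 0 = 0 by continuity at 0
  have hne : (nhdsWithin (0:ℝ) (Ioc 0 1)).NeBot := by
    rw [← mem_closure_iff_nhdsWithin_neBot, closure_Ioc (zero_ne_one' ℝ)]
    exact ⟨le_rfl, zero_le_one⟩
  have hΦ1 : Φ 1 = 0 := by
    have t1 : Filter.Tendsto Φ (nhdsWithin (0:ℝ) (Ioc 0 1)) (nhds (Φ 0)) :=
      (hΦc 0 ⟨le_rfl, zero_le_one⟩).mono_left
        (nhdsWithin_mono _ (Ioc_subset_Icc_self.trans (by norm_num)))
    have t2 : Filter.Tendsto Φ (nhdsWithin (0:ℝ) (Ioc 0 1)) (nhds (Φ 1)) := by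
      apply Filter.Tendsto.congr' _ tendsto_const_nhds
      filter_upwards [self_mem_nhdsWithin] with x hx
      exact hconst x hx
    rw [hΦ0] at t1
    exact tendsto_nhds_unique t2 t1
  have hΦcc : Φ c = 0 := by
    rcases eq_or_lt_of_le hc1 with h | h
    · rw [h]; exact hΦ1
    · rw [← hΦ1]; exact (hconst c ⟨hc, hc1⟩).symm
  -- unfold Φ c = 0
  have expand : ∫ u in (0:ℝ)..c, (c - u) * h u = c * P c - Q c := by
    have : (fun u : ℝ => (c - u) * h u) = fun u => c * h u - u * h u := by
      funext u; ring
    rw [this, integral_sub ((hmono c hc.le hc1).const_mul c) (huhmono c hc.le hc1),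
      intervalIntegral.integral_const_mul]
  rw [expand]
  have : c * P c - Q c - S c = 0 := hΦcc
  have : c * P c - Q c = S c := by linarith
  rw [this]
lemma prim_lt {h : ℝ → ℝ} (hint : IntervalIntegrable h volume 0 1)
    {x x' : ℝ} (h0 : 0 ≤ x) (hxx : x < x') (h1 : x' ≤ 1)
    (hpos : ∀ u ∈ Ioo x x', 0 < h u) :
    (∫ u in (0:ℝ)..x, h u) < ∫ u in (0:ℝ)..x', h u := by
  have hi1 : IntervalIntegrable h volume 0 x := by
    refine hint.mono_set ?_
    rw [uIcc_of_le h0, uIcc_of_le zero_le_one]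
    exact Icc_subset_Icc le_rfl (by linarith)
  have hi2 : IntervalIntegrable h volume x x' := by
    refine hint.mono_set ?_
    rw [uIcc_of_le hxx.le, uIcc_of_le zero_le_one]
    exact Icc_subset_Icc h0 h1
  have := integral_add_adjacent_intervals hi1 hi2
  have hpos' : 0 < ∫ u in x..x', h u := intervalIntegral_pos_of_pos_on hi2 hpos hxx
  linarith [this]

lemma prim_gt {h : ℝ → ℝ} (hint : IntervalIntegrable h volume 0 1)
    {x x' : ℝ} (h0 : 0 ≤ x) (hxx : x < x') (h1 : x' ≤ 1)
    (hneg : ∀ u ∈ Ioo x x', h u < 0) :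
    (∫ u in (0:ℝ)..x', h u) < ∫ u in (0:ℝ)..x, h u := by
  have := prim_lt (h := fun u => -h u) hint.neg h0 hxx h1
    (fun u hu => by simpa using hneg u hu)
  simp only [intervalIntegral.integral_neg] at this
  linarith

lemma integral_nonneg_of_pos_on {f : ℝ → ℝ} {a b : ℝ} (hab : a ≤ b)
    (hf : ∀ x ∈ Ioo a b, 0 ≤ f x) : 0 ≤ ∫ x in a..b, f x := by
  rw [intervalIntegral.integral_of_le hab]
  apply MeasureTheory.setIntegral_nonneg_ae measurableSet_Ioc
  have hb : ∀ᵐ (x : ℝ) ∂volume, x ∉ ({b} : Set ℝ) :=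
    measure_eq_zero_iff_ae_notMem.mp (measure_singleton b)
  filter_upwards [hb] with x hx hmem
  exact hf x ⟨hmem.1, lt_of_le_of_ne hmem.2 (by simpa using hx)⟩

-- the kernel `g u = u^δ (1-u)^(y δ)`
section gshape

variable {y δ : ℝ}

noncomputable def gk (y δ : ℝ) : ℝ → ℝ := fun u => u ^ δ * (1 - u) ^ (y * δ)

lemma gk_cont (hy : 0 < y) (hδ : 0 < δ) : ContinuousOn (gk y δ) (Icc 0 1) := by
  apply ContinuousOn.mul
  · exact continuousOn_id.rpow_const fun u hu => Or.inr hδ.le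
  · exact (continuousOn_const.sub continuousOn_id).rpow_const fun u hu => Or.inr (by positivity)

lemma gk_deriv (hy : 0 < y) (hδ : 0 < δ) {u : ℝ} (hu : u ∈ Ioo (0:ℝ) 1) :
    HasDerivAt (gk y δ)
      (u ^ (δ - 1) * (1 - u) ^ (y * δ - 1) * (δ * (1 - (1 + y) * u))) u := by
  have h1u : (0:ℝ) < 1 - u := by linarith [hu.2]
  have h1 : HasDerivAt (fun u : ℝ => u ^ δ) (δ * u ^ (δ-1)) u :=
    Real.hasDerivAt_rpow_const (Or.inl hu.1.ne')
  have h2 : HasDerivAt (fun u : ℝ => (1 - u) ^ (y * δ)) (-(y * δ * (1-u) ^ (y * δ - 1))) u := by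
    have hc : HasDerivAt (fun u : ℝ => 1 - u) (-1) u := by
      simpa using (hasDerivAt_id u).const_sub 1
    have := (Real.hasDerivAt_rpow_const (x := 1 - u) (p := y * δ) (Or.inl h1u.ne')).comp u hc
    simpa [mul_comm, Function.comp_def] using this
  have := h1.mul h2
  refine this.congr_deriv ?_
  have e1 : u ^ δ = u ^ (δ - 1) * u := by
    rw [show δ = (δ - 1) + 1 by ring, Real.rpow_add hu.1, Real.rpow_one]; ring_nf
  have e2 : (1 - u) ^ (y * δ) = (1 - u) ^ (y * δ - 1) * (1 - u) := by
    rw [show y * δ = (y * δ - 1) + 1 by ring, Real.rpow_add h1u, Real.rpow_one]; ring_nf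
  rw [e1, e2]
  ring

lemma gk_strictMonoOn (hy : 0 < y) (hδ : 0 < δ) :
    StrictMonoOn (gk y δ) (Icc 0 (1/(1+y))) := by
  have hm1 : (0:ℝ) < 1/(1+y) := by positivity
  have hm2 : 1/(1+y) < 1 := by
    rw [div_lt_one (by linarith)]; linarith
  apply strictMonoOn_of_hasDerivWithinAt_pos (convex_Icc _ _)
    ((gk_cont hy hδ).mono (Icc_subset_Icc le_rfl hm2.le))
  · intro u hu
    rw [interior_Icc] at hu
    exact (gk_deriv hy hδ ⟨hu.1, lt_trans hu.2 hm2⟩).hasDerivWithinAt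
  · intro u hu
    rw [interior_Icc] at hu
    have h1u : (0:ℝ) < 1 - u := by nlinarith [hu.2, hm2]
    have : (1 + y) * u < 1 := by
      have := hu.2
      rw [lt_div_iff₀ (by linarith : (0:ℝ) < 1 + y)] at this
      linarith [this]
    have hpos : 0 < 1 - (1 + y) * u := by linarith
    have hu0 := hu.1
    exact mul_pos (mul_pos (Real.rpow_pos_of_pos hu0 _) (Real.rpow_pos_of_pos h1u _))
      (mul_pos hδ hpos)
  
lemma gk_strictAntiOn (hy : 0 < y) (hδ : 0 < δ) :
    StrictAntiOn (gk y δ) (Icc (1/(1+y)) 1) := by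
  have hm1 : (0:ℝ) < 1/(1+y) := by positivity
  apply strictAntiOn_of_hasDerivWithinAt_neg (convex_Icc _ _)
    ((gk_cont hy hδ).mono (Icc_subset_Icc hm1.le le_rfl))
  · intro u hu
    rw [interior_Icc] at hu
    exact (gk_deriv hy hδ ⟨lt_trans hm1 hu.1, hu.2⟩).hasDerivWithinAt
  · intro u hu
    rw [interior_Icc] at hu
    have hu0 : 0 < u := lt_trans hm1 hu.1
    have h1u : (0:ℝ) < 1 - u := by linarith [hu.2]
    have hneg : 1 - (1 + y) * u < 0 := by
      have := hu.1
      rw [div_lt_iff₀ (by linarith : (0:ℝ) < 1 + y)] at this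
      nlinarith [this]
    have hp : 0 < u ^ (δ - 1) * (1 - u) ^ (y * δ - 1) * δ := by positivity
    nlinarith [hp]

lemma gk_zero (hy : 0 < y) (hδ : 0 < δ) : gk y δ 0 = 0 := by
  simp [gk, Real.zero_rpow hδ.ne']

lemma gk_one (hy : 0 < y) (hδ : 0 < δ) : gk y δ 1 = 0 := by
  have : y * δ ≠ 0 := by positivity
  simp [gk, Real.zero_rpow this]

lemma gk_pos (hy : 0 < y) (hδ : 0 < δ) {u : ℝ} (hu : u ∈ Ioo (0:ℝ) 1) : 0 < gk y δ u := by
  have h1u : (0:ℝ) < 1 - u := by linarith [hu.2]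
  have := hu.1
  unfold gk; positivity

end gshape

lemma key {m q : ℝ} (hm : m ∈ Ioo (0:ℝ) 1) (hq : q ∈ Ioo (0:ℝ) 1) {α β : ℝ}
    (hβ : 0 < β) (hβα : β < α) :
    (1 / eulerBeta α ((1-m)/m * α)) * (∫ u in (0:ℝ)..q, (1 - u / q) * bf α ((1-m)/m * α) u)
      < (1 / eulerBeta β ((1-m)/m * β)) * (∫ u in (0:ℝ)..q, (1 - u / q) * bf β ((1-m)/m * β) u) := by
  obtain ⟨hm0, hm1⟩ := hm
  obtain ⟨hq0, hq1⟩ := hq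
  set y : ℝ := (1-m)/m with hy_def
  have hy : 0 < y := div_pos (by linarith) hm0
  have hα : 0 < α := lt_trans hβ hβα
  have hyβ : 0 < y * β := mul_pos hy hβ
  have hyα : 0 < y * α := mul_pos hy hα
  have hm_eq : m = 1 / (1 + y) := by
    rw [hy_def]; field_simp; ring
  set B1 : ℝ := eulerBeta β (y*β) with hB1_def
  set B2 : ℝ := eulerBeta α (y*α) with hB2_def
  have hB1 : 0 < B1 := eulerBeta_pos hβ hyβ
  have hB2 : 0 < B2 := eulerBeta_pos hα hyα
  set h : ℝ → ℝ := fun u => bf β (y*β) u / B1 - bf α (y*α) u / B2 with hh_def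
  have hint1 : IntervalIntegrable (fun u => bf β (y*β) u / B1) volume 0 1 :=
    (bf_intOn hβ hyβ).div_const B1
  have hint2 : IntervalIntegrable (fun u => bf α (y*α) u / B2) volume 0 1 :=
    (bf_intOn hα hyα).div_const B2
  have hhint : IntervalIntegrable h volume 0 1 := hint1.sub hint2
  have hhmono : ∀ c d : ℝ, 0 ≤ c → c ≤ 1 → 0 ≤ d → d ≤ 1 →
      IntervalIntegrable h volume c d := fun c d hc0 hc1 hd0 hd1 =>
    hhint.mono_set (uIcc_subset_uIcc
      (by rw [uIcc_of_le zero_le_one]; exact ⟨hc0, hc1⟩)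
      (by rw [uIcc_of_le zero_le_one]; exact ⟨hd0, hd1⟩))
  have hhc : ContinuousOn h (Ioo 0 1) :=
    ((bf_contOn _ _).div_const _).sub ((bf_contOn _ _).div_const _)
  -- total integral is zero
  have hI0 : (∫ u in (0:ℝ)..1, h u) = 0 := by
    rw [hh_def]
    rw [integral_sub hint1 hint2, intervalIntegral.integral_div, intervalIntegral.integral_div, ← eulerBeta_eq, ← eulerBeta_eq]
    rw [← hB1_def, ← hB2_def, div_self hB1.ne', div_self hB2.ne', sub_self]
  -- first moment is zero
  have hIu0 : (∫ u in (0:ℝ)..1, u * h u) = 0 := by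
    have e : (fun u : ℝ => u * h u)
        = fun u => (u * bf β (y*β) u) / B1 - (u * bf α (y*α) u) / B2 := by
      funext u; rw [hh_def]; ring
    have i1 : IntervalIntegrable (fun u : ℝ => u * bf β (y*β) u / B1) volume 0 1 :=
      ((bf_intOn hβ hyβ).continuousOn_mul continuous_id.continuousOn).div_const B1
    have i2 : IntervalIntegrable (fun u : ℝ => u * bf α (y*α) u / B2) volume 0 1 :=
      ((bf_intOn hα hyα).continuousOn_mul continuous_id.continuousOn).div_const B2
    rw [e, integral_sub i1 i2,
      intervalIntegral.integral_div, intervalIntegral.integral_div, beta_mean hβ hyβ, beta_mean hα hyα]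
    have c1 : β / (β + y * β) = 1 / (1 + y) := by
      rw [div_eq_div_iff (by positivity) (by positivity)]; ring
    have c2 : α / (α + y * α) = 1 / (1 + y) := by
      rw [div_eq_div_iff (by positivity) (by positivity)]; ring
    rw [c1, c2, ← hB1_def, ← hB2_def, mul_div_assoc, mul_div_assoc,
      div_self hB1.ne', div_self hB2.ne', sub_self]
  -- factorization of h through the kernel gk
  set dlt : ℝ := α - β with hdlt_def
  have hδ : 0 < dlt := by rw [hdlt_def]; linarith
  have hfact : ∀ u ∈ Ioo (0:ℝ) 1, h u = bf β (y*β) u * (1/B1 - gk y dlt u / B2) := by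
    intro u hu
    have h1u : (0:ℝ) < 1 - u := by linarith [hu.2]
    have hbfa : bf α (y*α) u = bf β (y*β) u * gk y dlt u := by
      simp only [bf, gk]
      rw [show α - 1 = (β-1) + dlt by rw [hdlt_def]; ring, Real.rpow_add hu.1,
        show y*α - 1 = (y*β-1) + y*dlt by rw [hdlt_def]; ring, Real.rpow_add h1u]
      ring
    rw [hh_def]; simp only []
    rw [hbfa]; ring
  -- sign transfer
  have hsign_pos : ∀ u ∈ Ioo (0:ℝ) 1, gk y dlt u < B2/B1 → 0 < h u := by
    intro u hu hlt
    rw [hfact u hu]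
    apply mul_pos (bf_pos hu)
    rw [sub_pos, div_lt_div_iff₀ hB2 hB1, one_mul]
    rwa [lt_div_iff₀ hB1] at hlt
  have hsign_neg : ∀ u ∈ Ioo (0:ℝ) 1, B2/B1 < gk y dlt u → h u < 0 := by
    intro u hu hlt
    rw [hfact u hu]
    apply mul_neg_of_pos_of_neg (bf_pos hu)
    rw [sub_neg, div_lt_div_iff₀ hB1 hB2, one_mul]
    rwa [div_lt_iff₀ hB1] at hlt
  have hsign_nonneg : ∀ u ∈ Ioo (0:ℝ) 1, gk y dlt u ≤ B2/B1 → 0 ≤ h u := by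
    intro u hu hle
    rw [hfact u hu]
    apply mul_nonneg (bf_pos hu).le
    rw [sub_nonneg, div_le_div_iff₀ hB2 hB1, one_mul]
    rwa [le_div_iff₀ hB1] at hle
  -- monotonicity of gk on the two sides of m
  have hmono_g : StrictMonoOn (gk y dlt) (Icc 0 m) := by
    rw [hm_eq]; exact gk_strictMonoOn hy hδ
  have hanti_g : StrictAntiOn (gk y dlt) (Icc m 1) := by
    rw [hm_eq]; exact gk_strictAntiOn hy hδ
  -- the level B2/B1 is strictly below the max of gk
  have hκmax : B2/B1 < gk y dlt m := by
    by_contra hle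
    push_neg at hle
    have hub : ∀ u ∈ Ioo (0:ℝ) 1, gk y dlt u ≤ gk y dlt m := by
      intro u hu
      rcases le_or_gt u m with hum | hum
      · rcases eq_or_lt_of_le hum with heq | hlt
        · rw [heq]
        · exact (hmono_g ⟨hu.1.le, hum⟩ ⟨hm0.le, le_rfl⟩ hlt).le
      · exact (hanti_g ⟨le_rfl, hm1.le⟩ ⟨hum.le, hu.2.le⟩ hum).le
    have hpos_left : ∀ u ∈ Ioo (0:ℝ) m, 0 < h u := by
      intro u hu
      have hu' : u ∈ Ioo (0:ℝ) 1 := ⟨hu.1, lt_trans hu.2 hm1⟩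
      apply hsign_pos u hu'
      exact lt_of_lt_of_le (hmono_g ⟨hu.1.le, hu.2.le⟩ ⟨hm0.le, le_rfl⟩ hu.2) hle
    have h1 : 0 < ∫ u in (0:ℝ)..m, h u :=
      intervalIntegral_pos_of_pos_on (hhmono 0 m le_rfl zero_le_one hm0.le hm1.le)
        hpos_left hm0
    have h2 : 0 ≤ ∫ u in m..1, h u := by
      apply integral_nonneg_of_pos_on hm1.le
      intro u hu
      have hu' : u ∈ Ioo (0:ℝ) 1 := ⟨lt_trans hm0 hu.1, hu.2⟩
      exact hsign_nonneg u hu' (le_trans (hub u hu') hle)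
    have := integral_add_adjacent_intervals
      (hhmono 0 m le_rfl zero_le_one hm0.le hm1.le) (hhmono m 1 hm0.le hm1.le zero_le_one le_rfl)
    rw [hI0] at this
    linarith
  have hκpos : 0 < B2/B1 := by positivity
  have hgc01 : ContinuousOn (gk y dlt) (Icc 0 1) := gk_cont hy hδ
  -- the two crossing points
  obtain ⟨t1, ht1, hgt1⟩ : ∃ t1 ∈ Ioo (0:ℝ) m, gk y dlt t1 = B2/B1 := by
    have himg := intermediate_value_Ioo hm0.le (hgc01.mono (Icc_subset_Icc le_rfl hm1.le))
    have : B2/B1 ∈ Ioo (gk y dlt 0) (gk y dlt m) := by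
      rw [gk_zero hy hδ]; exact ⟨hκpos, hκmax⟩
    obtain ⟨t1, ht1, hgt1⟩ := himg this
    exact ⟨t1, ht1, hgt1⟩
  obtain ⟨t2, ht2, hgt2⟩ : ∃ t2 ∈ Ioo m 1, gk y dlt t2 = B2/B1 := by
    have himg := intermediate_value_Ioo' hm1.le (hgc01.mono (Icc_subset_Icc hm0.le le_rfl))
    have : B2/B1 ∈ Ioo (gk y dlt 1) (gk y dlt m) := by
      rw [gk_one hy hδ]; exact ⟨hκpos, hκmax⟩
    obtain ⟨t2, ht2, hgt2⟩ := himg this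
    exact ⟨t2, ht2, hgt2⟩
  have ht10 : 0 < t1 := ht1.1
  have ht1m : t1 < m := ht1.2
  have ht2m : m < t2 := ht2.1
  have ht21 : t2 < 1 := ht2.2
  have ht11 : t1 < 1 := lt_trans ht1m hm1
  have ht20 : 0 < t2 := lt_trans hm0 ht2m
  -- sign regions of h
  have hpos1 : ∀ u ∈ Ioo (0:ℝ) t1, 0 < h u := by
    intro u hu
    have hu' : u ∈ Ioo (0:ℝ) 1 := ⟨hu.1, lt_trans hu.2 ht11⟩
    apply hsign_pos u hu'
    rw [← hgt1]
    exact hmono_g ⟨hu.1.le, le_of_lt (lt_trans hu.2 ht1m)⟩ ⟨ht10.le, ht1m.le⟩ hu.2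
  have hneg : ∀ u ∈ Ioo t1 t2, h u < 0 := by
    intro u hu
    have hu' : u ∈ Ioo (0:ℝ) 1 := ⟨lt_trans ht10 hu.1, lt_trans hu.2 ht21⟩
    apply hsign_neg u hu'
    rcases le_or_gt u m with hum | hum
    · rw [← hgt1]
      exact hmono_g ⟨ht10.le, ht1m.le⟩ ⟨hu'.1.le, hum⟩ hu.1
    · rw [← hgt2]
      exact hanti_g ⟨hum.le, hu'.2.le⟩ ⟨ht2m.le, ht21.le⟩ hu.2
  have hpos2 : ∀ u ∈ Ioo t2 1, 0 < h u := by
    intro u hu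
    have hu' : u ∈ Ioo (0:ℝ) 1 := ⟨lt_trans ht20 hu.1, hu.2⟩
    apply hsign_pos u hu'
    rw [← hgt2]
    exact hanti_g ⟨ht2m.le, ht21.le⟩ ⟨le_of_lt (lt_trans ht2m hu.1), hu.2.le⟩ hu.1
  -- the primitive A
  set A : ℝ → ℝ := fun x => ∫ u in (0:ℝ)..x, h u with hA_def
  have hA0 : A 0 = 0 := integral_same
  have hA1 : A 1 = 0 := hI0
  have hAt1 : 0 < A t1 := by
    have h' : A 0 < A t1 := prim_lt hhint le_rfl ht10 ht11.le hpos1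
    rwa [hA0] at h'
  have hAt2 : A t2 < 0 := by
    have h' : A t2 < A 1 := prim_lt hhint ht20.le ht21 le_rfl hpos2
    rwa [hA1] at h'
  have hAc : ContinuousOn A (Icc 0 1) := by
    have := continuousOn_primitive_interval' hhint
      (by rw [uIcc_of_le zero_le_one]; exact ⟨le_rfl, zero_le_one⟩)
    rwa [uIcc_of_le zero_le_one] at this
  -- the single zero s of A
  obtain ⟨sp, hsp, hAsp⟩ : ∃ sp ∈ Ioo t1 t2, A sp = 0 := by
    have himg := intermediate_value_Ioo' (le_of_lt (lt_trans ht1m ht2m))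
      (hAc.mono (Icc_subset_Icc ht10.le ht21.le))
    have : (0:ℝ) ∈ Ioo (A t2) (A t1) := ⟨hAt2, hAt1⟩
    obtain ⟨sp, hsp, hAsp⟩ := himg this
    exact ⟨sp, hsp, hAsp⟩
  have hsp0 : 0 < sp := lt_trans ht10 hsp.1
  have hsp1 : sp < 1 := lt_trans hsp.2 ht21
  have hApos : ∀ u ∈ Ioo (0:ℝ) sp, 0 < A u := by
    intro u hu
    rcases le_or_gt u t1 with hut | hut
    · have h' : A 0 < A u := prim_lt hhint le_rfl hu.1 (le_trans hut ht11.le)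
        (fun v hv => hpos1 v ⟨hv.1, lt_of_lt_of_le hv.2 hut⟩)
      rwa [hA0] at h'
    · have h' : A sp < A u := prim_gt hhint hu.1.le hu.2 hsp1.le
        (fun v hv => hneg v ⟨lt_trans hut hv.1, lt_trans hv.2 hsp.2⟩)
      rwa [hAsp] at h'
  have hAneg : ∀ u ∈ Ioo sp 1, A u < 0 := by
    intro u hu
    rcases le_or_gt u t2 with hut | hut
    · have h' : A u < A sp := prim_gt hhint hsp0.le hu.1 hu.2.le
        (fun v hv => hneg v ⟨lt_trans hsp.1 hv.1, lt_of_lt_of_le hv.2 hut⟩)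
      rwa [hAsp] at h'
    · have h' : A u < A 1 := prim_lt hhint (lt_trans hsp0 hu.1).le hu.2 le_rfl
        (fun v hv => hpos2 v ⟨lt_trans hut hv.1, hv.2⟩)
      rwa [hA1] at h'
  -- integrability of A
  have hAint : IntervalIntegrable A volume 0 1 := by
    apply ContinuousOn.intervalIntegrable
    rwa [uIcc_of_le zero_le_one]
  have hAmono : ∀ c d : ℝ, 0 ≤ c → c ≤ 1 → 0 ≤ d → d ≤ 1 →
      IntervalIntegrable A volume c d := fun c d hc0 hc1 hd0 hd1 =>
    hAint.mono_set (uIcc_subset_uIcc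
      (by rw [uIcc_of_le zero_le_one]; exact ⟨hc0, hc1⟩)
      (by rw [uIcc_of_le zero_le_one]; exact ⟨hd0, hd1⟩))
  -- total integral of A is zero
  have hIA1 : (∫ x in (0:ℝ)..1, A x) = 0 := by
    have hparts := parts_id hhint hhc one_pos le_rfl
    have e : (fun u : ℝ => (1 - u) * h u) = fun u => h u - u * h u := by
      funext u; ring
    have huh : IntervalIntegrable (fun u : ℝ => u * h u) volume 0 1 :=
      hhint.continuousOn_mul continuous_id.continuousOn
    rw [← hparts, e, integral_sub hhint huh, hI0, hIu0, sub_zero]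
  -- positivity of ∫₀^q A
  have hSq : 0 < ∫ x in (0:ℝ)..q, A x := by
    rcases le_or_gt q sp with hqs | hqs
    · exact intervalIntegral_pos_of_pos_on (hAmono 0 q le_rfl zero_le_one hq0.le hq1.le)
        (fun x hx => hApos x ⟨hx.1, lt_of_lt_of_le hx.2 hqs⟩) hq0
    · have hadj := integral_add_adjacent_intervals
        (hAmono 0 q le_rfl zero_le_one hq0.le hq1.le)
        (hAmono q 1 hq0.le hq1.le zero_le_one le_rfl)
      rw [hIA1] at hadj
      have hneg1 : (∫ x in q..1, A x) < 0 := by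
        have hni : IntervalIntegrable (fun x => -A x) volume q 1 :=
          (hAmono q 1 hq0.le hq1.le zero_le_one le_rfl).neg
        have := intervalIntegral_pos_of_pos_on hni
          (fun x hx => by simpa using hAneg x ⟨lt_trans hqs hx.1, hx.2⟩) hq1
        rw [intervalIntegral.integral_neg] at this
        linarith
      linarith
  -- convert to the target integral
  have hmain : 0 < ∫ u in (0:ℝ)..q, (1 - u / q) * h u := by
    have e : (fun u : ℝ => (1 - u / q) * h u) = fun u => (1/q) * ((q - u) * h u) := by
      funext u; field_simp
    rw [e, intervalIntegral.integral_const_mul, parts_id hhint hhc hq0 hq1.le]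
    positivity
  -- expand h in the target integral
  have hIib : IntervalIntegrable (fun u => (1 - u / q) * bf β (y*β) u) volume 0 q :=
    (bf_intOn' hβ hyβ hq0.le hq1.le).continuousOn_mul
      ((continuousOn_const.sub (continuousOn_id.div_const q)))
  have hIia : IntervalIntegrable (fun u => (1 - u / q) * bf α (y*α) u) volume 0 q :=
    (bf_intOn' hα hyα hq0.le hq1.le).continuousOn_mul
      ((continuousOn_const.sub (continuousOn_id.div_const q)))
  have hsplit : (∫ u in (0:ℝ)..q, (1 - u / q) * h u)
      = (∫ u in (0:ℝ)..q, (1 - u / q) * bf β (y*β) u) / B1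
        - (∫ u in (0:ℝ)..q, (1 - u / q) * bf α (y*α) u) / B2 := by
    have e : (fun u : ℝ => (1 - u / q) * h u)
        = fun u => ((1 - u / q) * bf β (y*β) u) / B1 - ((1 - u / q) * bf α (y*α) u) / B2 := by
      funext u; rw [hh_def]; ring
    rw [e, integral_sub (hIib.div_const B1) (hIia.div_const B2), intervalIntegral.integral_div, intervalIntegral.integral_div]
  rw [hsplit] at hmain
  rw [one_div, inv_mul_eq_div, one_div, inv_mul_eq_div]
  linarith

lemma alphaOf_pos {m v : ℝ} (hm : m ∈ Ioo (0:ℝ) 1) (hv : v ∈ Ioo 0 (m * (1 - m))) :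
    0 < alphaOf m v := by
  obtain ⟨hm0, hm1⟩ := hm
  obtain ⟨hv0, hv1⟩ := hv
  have : m < m ^ 2 * (1 - m) / v := by
    rw [lt_div_iff₀ hv0]
    nlinarith
  simp only [alphaOf]
  linarith

lemma alphaOf_anti {m v1 v2 : ℝ} (hm : m ∈ Ioo (0:ℝ) 1) (hv1 : 0 < v1) (hv12 : v1 < v2) :
    alphaOf m v2 < alphaOf m v1 := by
  obtain ⟨hm0, hm1⟩ := hm
  have hnum : 0 < m ^ 2 * (1 - m) := by
    have h1 : (0:ℝ) < m ^ 2 := by positivity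
    have h2 : (0:ℝ) < 1 - m := by linarith
    exact mul_pos h1 h2
  simp only [alphaOf]
  have : m ^ 2 * (1 - m) / v2 < m ^ 2 * (1 - m) / v1 :=
    div_lt_div_of_pos_left hnum hv1 hv12
  linarith

/-- analytic core of Proposition 2: fix `m ∈ (0,1)`, `q ∈ (0,1)`,
set `y = (1-m)/m`. For `v ∈ (0, m(1-m))`, with `α(v) = m²(1-m)/v - m`, the
beta-approximated data offloading ratio
`R(v) = 1 - (1/B(α(v), yα(v))) ∫₀^q (1 - u/q) u^(α(v)-1) (1-u)^(yα(v)-1) du`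
is strictly decreasing in `v` on `(0, m(1-m))`. -/
theorem offloading_ratio_decreases_with_variance
    (m q : ℝ) (hm : m ∈ Set.Ioo (0:ℝ) 1) (hq : q ∈ Set.Ioo (0:ℝ) 1) :
    StrictAntiOn (fun v : ℝ =>
      1 - (1 / eulerBeta (alphaOf m v) (((1 - m) / m) * alphaOf m v)) *
        ∫ u in (0:ℝ)..q,
          (1 - u / q) * u ^ (alphaOf m v - 1)
            * (1 - u) ^ (((1 - m) / m) * alphaOf m v - 1))
      (Set.Ioo 0 (m * (1 - m))) := by
  intro v1 hv1 v2 hv2 h12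
  simp only []
  have hα2 : 0 < alphaOf m v2 := alphaOf_pos hm hv2
  have hα12 : alphaOf m v2 < alphaOf m v1 := alphaOf_anti hm hv1.1 h12
  have hkey := key hm hq hα2 hα12
  have e : ∀ a b : ℝ, (∫ u in (0:ℝ)..q, (1 - u / q) * u ^ (a - 1) * (1 - u) ^ (b - 1))
      = ∫ u in (0:ℝ)..q, (1 - u / q) * bf a b u := by
    intro a b
    apply intervalIntegral.integral_congr
    intro u hu
    simp only [bf]
    ring
  rw [e, e]
  exact sub_lt_sub_left hkey 1
end

section
/- Let T > 0. The function h(x) = (T x − 1 + e^{−T x}) / x² is strictly decreasing on (0, ∞). (This expresses that each summand (1/(μκ))(τ₀ − 1/(μκ) + e^{−μκτ₀}/(μκ)) of the communication-duration variance in Lemma 3 is strictly decreasing in the speed scaling factor μ.) -/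
open Real Set

private lemma aux_hasDerivAt (x : ℝ) :
    HasDerivAt (fun u : ℝ => u + u * Real.exp (-u) + 2 * Real.exp (-u) - 2)
      (1 - (1 + x) * Real.exp (-x)) x := by
  have he : HasDerivAt (fun y : ℝ => Real.exp (-y)) (-Real.exp (-x)) x := by
    exact ((Real.hasDerivAt_exp (-x)).comp x (hasDerivAt_neg x)).congr_deriv (by simp)
  have h1 : HasDerivAt (fun y : ℝ => y * Real.exp (-y))
      (1 * Real.exp (-x) + x * (-Real.exp (-x))) x :=
    (hasDerivAt_id x).mul he
  have h2 : HasDerivAt (fun y : ℝ => 2 * Real.exp (-y)) (2 * (-Real.exp (-x))) x :=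
    he.const_mul 2
  have h3 := (((hasDerivAt_id x).add h1).add h2).sub_const 2
  exact h3.congr_deriv (by ring)

private lemma key_ineq_s3 {u : ℝ} (hu : 0 < u) :
    0 < u + u * Real.exp (-u) + 2 * Real.exp (-u) - 2 := by
  have hmono : StrictMonoOn
      (fun u : ℝ => u + u * Real.exp (-u) + 2 * Real.exp (-u) - 2) (Ici 0) := by
    apply strictMonoOn_of_deriv_pos (convex_Ici 0)
    · exact fun x _ => (aux_hasDerivAt x).continuousAt.continuousWithinAt
    · intro x hx
      rw [interior_Ici] at hx
      rw [(aux_hasDerivAt x).deriv]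
      have h1 : x + 1 < Real.exp x := Real.add_one_lt_exp (ne_of_gt hx)
      have h2 : 0 < Real.exp (-x) := Real.exp_pos _
      have h3 : Real.exp x * Real.exp (-x) = 1 := by
        rw [← Real.exp_add]; simp
      nlinarith
  have h0 := hmono (a := 0) (b := u) (by simp) (le_of_lt hu) hu
  simpa using h0

/-- for `T > 0`, the function `h(x) = (Tx - 1 + e^(-Tx))/x²` is
strictly decreasing on `(0, ∞)`. -/
theorem variance_summand_strictAnti (T : ℝ) (hT : 0 < T) :
    StrictAntiOn (fun x : ℝ => (T * x - 1 + Real.exp (-(T * x))) / x ^ 2)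
      (Set.Ioi 0) := by
  have hder : ∀ x : ℝ, 0 < x →
      HasDerivAt (fun x : ℝ => (T * x - 1 + Real.exp (-(T * x))) / x ^ 2)
        (((T - T * Real.exp (-(T * x))) * x ^ 2 -
          (T * x - 1 + Real.exp (-(T * x))) * (2 * x)) / (x ^ 2) ^ 2) x := by
    intro x hx
    have hlin : HasDerivAt (fun y : ℝ => T * y) T x := by
      simpa using (hasDerivAt_id x).const_mul T
    have he : HasDerivAt (fun y : ℝ => Real.exp (-(T * y)))
        (Real.exp (-(T * x)) * (-T)) x :=
      by have h := (Real.hasDerivAt_exp (-(T * x))).comp x hlin.neg; exact h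
    have hN : HasDerivAt (fun y : ℝ => T * y - 1 + Real.exp (-(T * y)))
        (T - T * Real.exp (-(T * x))) x := by
      have := (hlin.sub_const 1).add he
      exact this.congr_deriv (by ring)
    have hD : HasDerivAt (fun y : ℝ => y ^ 2) (2 * x) x := by
      simpa using hasDerivAt_pow 2 x
    exact hN.div hD (pow_ne_zero 2 (ne_of_gt hx))
  apply strictAntiOn_of_deriv_neg (convex_Ioi 0)
  · exact fun x hx => ((hder x hx).continuousAt).continuousWithinAt
  · intro x hx
    rw [interior_Ioi] at hx
    rw [(hder x hx).deriv]
    have hu : 0 < T * x := mul_pos hT hx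
    have hk := key_ineq_s3 hu
    have hnum : (T - T * Real.exp (-(T * x))) * x ^ 2 -
        (T * x - 1 + Real.exp (-(T * x))) * (2 * x) < 0 := by
      have h5 : 0 < x * (T * x + T * x * Real.exp (-(T * x)) +
          2 * Real.exp (-(T * x)) - 2) := mul_pos hx hk
      have h6 : (T - T * Real.exp (-(T * x))) * x ^ 2 -
          (T * x - 1 + Real.exp (-(T * x))) * (2 * x) =
          -(x * (T * x + T * x * Real.exp (-(T * x)) +
            2 * Real.exp (-(T * x)) - 2)) := by ring
      linarith
    have hden : (0 : ℝ) < (x ^ 2) ^ 2 := pow_pos (pow_pos hx 2) 2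
    exact div_neg_of_neg_of_pos hnum hden
end

section
/- Let τ₀ > 0, let a₀ > 0, let Z range over a finite nonempty index set, and for each Z let a_Z ≥ 0 and κ_Z > 0, with a_Z > 0 for at least one index Z. Then the function V(μ) = 2 a₀ Σ_Z (a_Z/(μ κ_Z)) · (τ₀ − 1/(μ κ_Z) + e^{−μ κ_Z τ₀}/(μ κ_Z)) is strictly decreasing on μ ∈ (0, ∞). (This is Lemma 4: when all user speeds are scaled by μ, the variance Var[τ^c_{i,f}(μ)] of the communication duration, given by the finite-sum expression of Lemma 3, strictly decreases in μ, while the expectation is unchanged.) -/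
open Finset

lemma aux1 {t : ℝ} (ht : 0 < t) : (t + 1) * Real.exp (-t) < 1 := by
  have h := Real.add_one_lt_exp (x := t) (by positivity)
  calc (t + 1) * Real.exp (-t) < Real.exp t * Real.exp (-t) :=
        mul_lt_mul_of_pos_right (by linarith) (Real.exp_pos _)
    _ = 1 := by rw [← Real.exp_add]; simp

lemma aux2 {t : ℝ} (ht : 0 < t) : 2 - t - (t + 2) * Real.exp (-t) < 0 := by
  have hA : StrictAntiOn (fun s : ℝ => 2 - s - (s + 2) * Real.exp (-s)) (Set.Ici 0) := by
    apply strictAntiOn_of_deriv_neg (convex_Ici 0)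
    · fun_prop
    · intro x hx
      rw [interior_Ici] at hx
      have h1 : HasDerivAt (fun s : ℝ => Real.exp (-s)) (Real.exp (-x) * (-1)) x :=
        (hasDerivAt_neg x).exp
      have hd : HasDerivAt (fun s : ℝ => 2 - s - (s + 2) * Real.exp (-s))
          ((0 - 1) - (1 * Real.exp (-x) + (x + 2) * (Real.exp (-x) * (-1)))) x :=
        ((hasDerivAt_const x 2).sub (hasDerivAt_id x)).sub
          (((hasDerivAt_id x).add_const 2).mul h1)
      rw [hd.deriv]
      have := aux1 hx
      nlinarith [Real.exp_pos (-x)]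
  have h0 := hA Set.self_mem_Ici (Set.mem_Ici.mpr ht.le) ht
  simpa using h0

lemma F_anti {τ₀ : ℝ} (hτ₀ : 0 < τ₀) :
    StrictAntiOn (fun u : ℝ => (1 / u) * (τ₀ - 1 / u + Real.exp (-(u * τ₀)) / u))
      (Set.Ioi 0) := by
  have hder : ∀ x : ℝ, 0 < x → HasDerivAt
      (fun u : ℝ => (1 / u) * (τ₀ - 1 / u + Real.exp (-(u * τ₀)) / u))
      ((-(x ^ 2)⁻¹) * (τ₀ - 1 / x + Real.exp (-(x * τ₀)) / x)
        + (1 / x) * ((0 - (-(x ^ 2)⁻¹))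
            + ((Real.exp (-(x * τ₀)) * (-(1 * τ₀)) * x - Real.exp (-(x * τ₀)) * 1) / x ^ 2))) x := by
    intro x hx
    have hx0 : x ≠ 0 := ne_of_gt hx
    have hinv : HasDerivAt (fun u : ℝ => 1 / u) (-(x ^ 2)⁻¹) x := by
      simpa [one_div] using hasDerivAt_inv hx0
    have hexp : HasDerivAt (fun u : ℝ => Real.exp (-(u * τ₀)))
        (Real.exp (-(x * τ₀)) * (-(1 * τ₀))) x :=
      (((hasDerivAt_id x).mul_const τ₀).neg).exp
    exact hinv.mul (((hasDerivAt_const x τ₀).sub hinv).add (hexp.div (hasDerivAt_id x) hx0))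
  apply strictAntiOn_of_deriv_neg (convex_Ioi 0)
  · exact fun x hx => ((hder x hx).continuousAt).continuousWithinAt
  · intro x hx
    rw [interior_Ioi] at hx
    have hxp : (0:ℝ) < x := hx
    rw [(hder x hxp).deriv]
    have hx0 : x ≠ 0 := ne_of_gt hxp
    have hE := aux2 (t := x * τ₀) (mul_pos hxp hτ₀)
    have heq : (-(x ^ 2)⁻¹) * (τ₀ - 1 / x + Real.exp (-(x * τ₀)) / x)
        + (1 / x) * ((0 - (-(x ^ 2)⁻¹))
            + ((Real.exp (-(x * τ₀)) * (-(1 * τ₀)) * x - Real.exp (-(x * τ₀)) * 1) / x ^ 2))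
        = (x ^ 3)⁻¹ * (2 - x * τ₀ - (x * τ₀ + 2) * Real.exp (-(x * τ₀))) := by
      field_simp
      ring
    rw [heq]
    exact mul_neg_of_pos_of_neg (by positivity) hE

/-- Lemma 4: with `τ₀ > 0`, `a₀ > 0`, a finite nonempty index set,
coefficients `a_Z ≥ 0` (at least one positive) and rates `κ_Z > 0`, the variance
`V(μ) = 2 a₀ Σ_Z (a_Z/(μ κ_Z)) (τ₀ - 1/(μ κ_Z) + e^(-μ κ_Z τ₀)/(μ κ_Z))`
is strictly decreasing on `μ ∈ (0, ∞)`. -/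
theorem variance_strictAnti_in_speed
    {ι : Type*} [Fintype ι] [Nonempty ι]
    (τ₀ a₀ : ℝ) (hτ₀ : 0 < τ₀) (ha₀ : 0 < a₀)
    (a κ : ι → ℝ) (ha : ∀ Z, 0 ≤ a Z) (hκ : ∀ Z, 0 < κ Z) (hex : ∃ Z, 0 < a Z) :
    StrictAntiOn (fun μ : ℝ =>
      2 * a₀ * ∑ Z, (a Z / (μ * κ Z)) *
        (τ₀ - 1 / (μ * κ Z) + Real.exp (-(μ * κ Z * τ₀)) / (μ * κ Z)))
      (Set.Ioi 0) := by
  intro μ₁ h₁ μ₂ h₂ h12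
  simp only [Set.mem_Ioi] at h₁ h₂
  have key : ∀ (Z : ι) (μ : ℝ),
      a Z / (μ * κ Z) * (τ₀ - 1 / (μ * κ Z) + Real.exp (-(μ * κ Z * τ₀)) / (μ * κ Z))
      = a Z * ((1 / (μ * κ Z)) * (τ₀ - 1 / (μ * κ Z)
          + Real.exp (-(μ * κ Z * τ₀)) / (μ * κ Z))) := by
    intro Z μ; ring
  dsimp only
  simp only [key]
  apply mul_lt_mul_of_pos_left _ (by positivity)
  apply Finset.sum_lt_sum
  · intro Z _
    have hF := (F_anti hτ₀) (Set.mem_Ioi.mpr (mul_pos h₁ (hκ Z)))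
      (Set.mem_Ioi.mpr (mul_pos h₂ (hκ Z)))
      (by exact mul_lt_mul_of_pos_right h12 (hκ Z))
    exact mul_le_mul_of_nonneg_left hF.le (ha Z)
  · obtain ⟨Z₀, hZ₀⟩ := hex
    refine ⟨Z₀, mem_univ _, ?_⟩
    have hF := (F_anti hτ₀) (Set.mem_Ioi.mpr (mul_pos h₁ (hκ Z₀)))
      (Set.mem_Ioi.mpr (mul_pos h₂ (hκ Z₀)))
      (mul_lt_mul_of_pos_right h12 (hκ Z₀))
    exact mul_lt_mul_of_pos_left hF hZ₀
end
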